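/- arXiv:math/0011026 — 2 statements merged into one kernel-verified Lean document; each statement's English description precedes it below -/
import Mathlib

section
/- If m⁺ ≢ 0 on (T₁, T₂) (i.e. m(t) > 0 somewhere in (T₁, T₂)), then there exists exactly one a > 0 such that φ_a(T₁) = T₂, and this a equals the first positive eigenvalue λ₁^m of the Dirichlet problem -(p u')' + q u = λ m u on (T₁, T₂), u(T₁) = u(T₂) = 0. -/
open Set Real Filter Topology

structure IsSol (p q m : ℝ → ℝ) (T₁ : ℝ) (f f' : ℝ → ℝ) (a : ℝ) : Prop where
  init : f T₁ = 0
  init' : f' T₁ = 1 / p T₁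
  deriv : ∀ t, HasDerivAt f (f' t) t
  deriv2 : ∀ t, HasDerivAt (fun τ => p τ * f' τ) (q t * f t - a * m t * f t) t

noncomputable def slV (p q m : ℝ → ℝ) (a t : ℝ) (x : ℝ × ℝ) : ℝ × ℝ :=
  (x.2 / p t, (q t - a * m t) * x.1)

noncomputable def clampTo (A B t : ℝ) : ℝ := max A (min B t)

lemma clampTo_eq {A B t : ℝ} (h : t ∈ Icc A B) : clampTo A B t = t := by
  simp only [clampTo, min_eq_right h.2, max_eq_right h.1]

lemma clampTo_mem {A B : ℝ} (hAB : A ≤ B) (t : ℝ) : clampTo A B t ∈ Icc A B :=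
  ⟨le_max_left _ _, max_le hAB (min_le_left _ _)⟩

namespace IsSol

variable {p q m : ℝ → ℝ} {T₁ : ℝ} {f f' : ℝ → ℝ} {a : ℝ}

lemma contF (S : IsSol p q m T₁ f f' a) : Continuous f :=
  continuous_iff_continuousAt.2 fun t => (S.deriv t).continuousAt

lemma contW (S : IsSol p q m T₁ f f' a) : Continuous (fun t => p t * f' t) :=
  continuous_iff_continuousAt.2 fun t => (S.deriv2 t).continuousAt

lemma contF' (S : IsSol p q m T₁ f f' a) (hp : Continuous p) (hppos : ∀ t, 0 < p t) :
    Continuous f' := by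
  have : Continuous (fun t => (p t * f' t) / p t) :=
    S.contW.div hp fun t => (hppos t).ne'
  refine this.congr fun t => ?_
  field_simp [(hppos t).ne']

lemma wT₁ (S : IsSol p q m T₁ f f' a) (hppos : ∀ t, 0 < p t) : p T₁ * f' T₁ = 1 := by
  rw [S.init']; field_simp [(hppos T₁).ne']

lemma derivG (S : IsSol p q m T₁ f f' a) (hppos : ∀ t, 0 < p t) (t : ℝ) :
    HasDerivAt (fun s => (f s, p s * f' s)) (slV p q m a t (f t, p t * f' t)) t := by
  have h := (S.deriv t).prodMk (S.deriv2 t)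
  convert h using 1
  unfold slV
  refine Prod.ext ?_ (by ring)
  field_simp [(hppos t).ne']

end IsSol

/-- Lipschitz constant for the clamped vector field, uniform in `|a| ≤ R`. -/
lemma lipschitz_clamped {p q m : ℝ → ℝ} (hp : Continuous p) (hq : Continuous q)
    (hm : Continuous m) (hppos : ∀ t, 0 < p t) {A B R : ℝ} (hAB : A ≤ B) (hR : 0 ≤ R) :
    ∃ K : NNReal, ∀ a : ℝ, |a| ≤ R → ∀ t : ℝ,
      LipschitzWith K (slV p q m a (clampTo A B t)) := by
  obtain ⟨t₁, ht₁, h₁m⟩ := isCompact_Icc.exists_isMaxOn (nonempty_Icc.2 hAB)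
    ((continuous_const.div hp fun t => (hppos t).ne').continuousOn :
      ContinuousOn (fun t => 1 / p t) (Icc A B))
  obtain ⟨t₂, ht₂, h₂m⟩ := isCompact_Icc.exists_isMaxOn (nonempty_Icc.2 hAB)
    (((hq.abs).add ((continuous_const.mul hm.abs))).continuousOn :
      ContinuousOn (fun t => |q t| + R * |m t|) (Icc A B))
  have h₁ : ∀ s ∈ Icc A B, 1 / p s ≤ 1 / p t₁ := fun s hs => h₁m hs
  have h₂ : ∀ s ∈ Icc A B, |q s| + R * |m s| ≤ |q t₂| + R * |m t₂| := fun s hs => h₂m hs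
  set C : ℝ := max (1 / p t₁) (|q t₂| + R * |m t₂|) with hC
  have hC0 : 0 ≤ C := le_trans (one_div_nonneg.2 (hppos t₁).le) (le_max_left _ _)
  refine ⟨Real.toNNReal C, fun a ha t => ?_⟩
  have hc := clampTo_mem hAB t
  set c := clampTo A B t
  apply LipschitzWith.of_dist_le_mul
  intro x y
  have hco : (Real.toNNReal C : ℝ) = C := Real.coe_toNNReal _ hC0
  rw [hco, Prod.dist_eq, Prod.dist_eq]
  simp only [slV, Real.dist_eq]
  have hd1 : |x.1 - y.1| ≤ max |x.1 - y.1| |x.2 - y.2| := le_max_left _ _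
  have hd2 : |x.2 - y.2| ≤ max |x.1 - y.1| |x.2 - y.2| := le_max_right _ _
  have hdn : (0:ℝ) ≤ max |x.1 - y.1| |x.2 - y.2| := le_trans (abs_nonneg _) hd1
  apply max_le
  · have : |x.2 / p c - y.2 / p c| = (1 / p c) * |x.2 - y.2| := by
      rw [div_sub_div_same, abs_div, abs_of_pos (hppos c)]
      ring
    rw [this]
    calc (1 / p c) * |x.2 - y.2| ≤ (1 / p t₁) * max |x.1 - y.1| |x.2 - y.2| := by
          apply mul_le_mul (h₁ c hc) hd2 (abs_nonneg _) (one_div_nonneg.2 (hppos t₁).le)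
      _ ≤ C * max |x.1 - y.1| |x.2 - y.2| := by
          apply mul_le_mul_of_nonneg_right (le_max_left _ _) hdn
  · have : |(q c - a * m c) * x.1 - (q c - a * m c) * y.1| = |q c - a * m c| * |x.1 - y.1| := by
      rw [← abs_mul]; ring_nf
    rw [this]
    have hqm : |q c - a * m c| ≤ |q t₂| + R * |m t₂| := by
      calc |q c - a * m c| ≤ |q c| + |a| * |m c| := by
            refine (abs_sub _ _).trans ?_
            rw [abs_mul]
      _ ≤ |q c| + R * |m c| := by
            have := mul_le_mul_of_nonneg_right ha (abs_nonneg (m c))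
            linarith
      _ ≤ |q t₂| + R * |m t₂| := h₂ c hc
    calc |q c - a * m c| * |x.1 - y.1| ≤ (|q t₂| + R * |m t₂|) * max |x.1 - y.1| |x.2 - y.2| :=
          mul_le_mul hqm hd1 (abs_nonneg _) (add_nonneg (abs_nonneg _) (mul_nonneg hR (abs_nonneg _)))
      _ ≤ C * max |x.1 - y.1| |x.2 - y.2| :=
          mul_le_mul_of_nonneg_right (le_max_right _ _) hdn
lemma gronwall_simple {K ε x : ℝ} (hK : 0 ≤ K) (hε : 0 ≤ ε) (hx : 0 ≤ x) :
    gronwallBound 0 K ε x ≤ ε * x * Real.exp (K * x) := by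
  rcases eq_or_ne K 0 with h | h
  · subst h
    rw [gronwallBound_K0]
    simp only [zero_add, zero_mul, Real.exp_zero, mul_one]
    nlinarith [Real.exp_zero.le]
  · have hKpos : 0 < K := lt_of_le_of_ne hK (Ne.symm h)
    rw [gronwallBound_of_K_ne_0 h]
    have h0 : 1 - K * x ≤ Real.exp (-(K * x)) := by
      have := Real.add_one_le_exp (-(K * x)); linarith
    have h2 : Real.exp (K * x) - 1 ≤ K * x * Real.exp (K * x) := by
      have h1 : Real.exp (-(K * x)) * Real.exp (K * x) = 1 := by
        rw [← Real.exp_add]; simp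
      nlinarith [Real.exp_pos (K * x), mul_le_mul_of_nonneg_right h0 (Real.exp_pos (K * x)).le]
    have h3 : ε / K * (Real.exp (K * x) - 1) ≤ ε / K * (K * x * Real.exp (K * x)) :=
      mul_le_mul_of_nonneg_left h2 (by positivity)
    calc 0 * Real.exp (K * x) + ε / K * (Real.exp (K * x) - 1)
        ≤ ε / K * (K * x * Real.exp (K * x)) := by linarith
      _ = ε * x * Real.exp (K * x) := by field_simp

section Gronwall

variable {p q m : ℝ → ℝ} {T₁ : ℝ}

/-- A uniform a priori bound on solutions and their "momenta" on `[T₁,B]`, for `|a| ≤ R`. -/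
lemma sol_norm_bound (hp : Continuous p) (hq : Continuous q) (hm : Continuous m)
    (hppos : ∀ t, 0 < p t) {B R : ℝ} (hB : T₁ ≤ B) (hR : 0 ≤ R) :
    ∃ G : ℝ, 1 ≤ G ∧ ∀ (f f' : ℝ → ℝ) (a : ℝ), |a| ≤ R → IsSol p q m T₁ f f' a →
      ∀ t ∈ Icc T₁ B, |f t| ≤ G ∧ |p t * f' t| ≤ G := by
  obtain ⟨K, hK⟩ := lipschitz_clamped hp hq hm hppos (A := T₁) (B := B) hB hR
  refine ⟨Real.exp (K * (B - T₁)),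
    Real.one_le_exp (mul_nonneg K.coe_nonneg (by linarith)), ?_⟩
  intro f f' a ha S t ht
  have key : dist ((f t, p t * f' t) : ℝ × ℝ) ((0 : ℝ), (0 : ℝ))
      ≤ 1 * Real.exp (K * (t - T₁)) := by
    apply dist_le_of_trajectories_ODE (v := fun s x => slV p q m a (clampTo T₁ B s) x)
      (f := fun s => ((f s, p s * f' s) : ℝ × ℝ)) (g := fun _ => ((0:ℝ), (0:ℝ)))
      (hK a ha) ((S.contF.prodMk S.contW).continuousOn) ?_ continuousOn_const ?_ ?_ t ht
    · intro s hs
      show HasDerivWithinAt _ (slV p q m a (clampTo T₁ B s) (f s, p s * f' s)) (Ici s) s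
      rw [clampTo_eq (Ico_subset_Icc_self hs)]
      exact (S.derivG hppos s).hasDerivWithinAt
    · intro s hs
      show HasDerivWithinAt _ (slV p q m a (clampTo T₁ B s) ((0:ℝ), (0:ℝ))) (Ici s) s
      have h0 : slV p q m a (clampTo T₁ B s) ((0:ℝ), (0:ℝ)) = ((0:ℝ), (0:ℝ)) := by
        simp [slV]
      rw [h0]
      exact hasDerivWithinAt_const _ _ _
    · show dist ((f T₁, p T₁ * f' T₁) : ℝ × ℝ) ((0:ℝ), (0:ℝ)) ≤ 1
      rw [S.init, S.wT₁ hppos, Prod.dist_eq]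
      simp [Real.dist_eq]
  have hle : dist ((f t, p t * f' t) : ℝ × ℝ) ((0:ℝ), (0:ℝ)) ≤ Real.exp (K * (B - T₁)) := by
    refine key.trans ?_
    rw [one_mul]
    exact Real.exp_le_exp.2 (mul_le_mul_of_nonneg_left (by linarith [ht.2]) K.coe_nonneg)
  rw [Prod.dist_eq] at hle
  constructor
  · have h1 : |f t| = dist (f t) (0:ℝ) := by rw [Real.dist_eq, sub_zero]
    rw [h1]
    exact le_trans (le_max_left _ _) hle
  · have h1 : |p t * f' t| = dist (p t * f' t) (0:ℝ) := by rw [Real.dist_eq, sub_zero]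
    rw [h1]
    exact le_trans (le_max_right _ _) hle

/-- Lipschitz dependence of the solution pair on the parameter `a`. -/
lemma param_dist (hp : Continuous p) (hq : Continuous q) (hm : Continuous m)
    (hppos : ∀ t, 0 < p t) {B R : ℝ} (hB : T₁ ≤ B) (hR : 0 ≤ R) :
    ∃ C : ℝ, 0 < C ∧ ∀ (f f' g g' : ℝ → ℝ) (a b : ℝ), |a| ≤ R → |b| ≤ R →
      IsSol p q m T₁ f f' a → IsSol p q m T₁ g g' b → ∀ t ∈ Icc T₁ B,
      |f t - g t| ≤ C * |a - b| ∧ |p t * f' t - p t * g' t| ≤ C * |a - b| := by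
  obtain ⟨K, hK⟩ := lipschitz_clamped hp hq hm hppos (A := T₁) (B := B) hB hR
  obtain ⟨G, hG1, hG⟩ := sol_norm_bound hp hq hm hppos hB hR
  obtain ⟨tM, htM, hMm⟩ := isCompact_Icc.exists_isMaxOn (nonempty_Icc.2 hB)
    (hm.abs.continuousOn : ContinuousOn (fun s => |m s|) (Icc T₁ B))
  have hM : ∀ s ∈ Icc T₁ B, |m s| ≤ |m tM| := fun s hs => hMm hs
  have hM0 : (0:ℝ) ≤ |m tM| := abs_nonneg _
  have hCnn : 0 ≤ |m tM| * G * (B - T₁) * Real.exp (K * (B - T₁)) :=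
    mul_nonneg (mul_nonneg (mul_nonneg hM0 (le_trans zero_le_one hG1)) (sub_nonneg.2 hB))
      (Real.exp_pos _).le
  refine ⟨|m tM| * G * (B - T₁) * Real.exp (K * (B - T₁)) + 1, by linarith, ?_⟩
  intro f f' g g' a b ha hb Sa Sb t ht
  set ε : ℝ := |a - b| * (|m tM| * G) with hε
  have hε0 : 0 ≤ ε := by positivity
  have key : dist ((f t, p t * f' t) : ℝ × ℝ) ((g t, p t * g' t) : ℝ × ℝ)
      ≤ gronwallBound 0 K (0 + ε) (t - T₁) := by
    apply dist_le_of_approx_trajectories_ODE (v := fun s x => slV p q m a (clampTo T₁ B s) x)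
      (f := fun s => ((f s, p s * f' s) : ℝ × ℝ)) (f' := fun s => slV p q m a s (f s, p s * f' s))
      (g := fun s => ((g s, p s * g' s) : ℝ × ℝ)) (g' := fun s => slV p q m b s (g s, p s * g' s))
      (hK a ha) ((Sa.contF.prodMk Sa.contW).continuousOn) ?_ ?_
      ((Sb.contF.prodMk Sb.contW).continuousOn) ?_ ?_ ?_ t ht
    · exact fun s _ => (Sa.derivG hppos s).hasDerivWithinAt
    · intro s hs
      show dist (slV p q m a s (f s, p s * f' s))
        (slV p q m a (clampTo T₁ B s) (f s, p s * f' s)) ≤ 0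
      rw [clampTo_eq (Ico_subset_Icc_self hs), dist_self]
    · exact fun s _ => (Sb.derivG hppos s).hasDerivWithinAt
    · intro s hs
      show dist (slV p q m b s (g s, p s * g' s))
        (slV p q m a (clampTo T₁ B s) (g s, p s * g' s)) ≤ ε
      rw [clampTo_eq (Ico_subset_Icc_self hs), Prod.dist_eq]
      apply max_le
      · simp [slV]
        exact hε0
      · simp only [slV, Real.dist_eq]
        have h1 : (q s - b * m s) * g s - (q s - a * m s) * g s = (a - b) * m s * g s := by ring
        have h2 : |(a - b) * m s * g s| ≤ |a - b| * (|m tM| * G) := by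
          rw [abs_mul, abs_mul]
          have hg := (hG g g' b hb Sb s (Ico_subset_Icc_self hs)).1
          have hms := hM s (Ico_subset_Icc_self hs)
          have := mul_le_mul hms hg (abs_nonneg _) hM0
          nlinarith [abs_nonneg (a - b), abs_nonneg (m s), abs_nonneg (g s)]
        rw [h1]
        exact h2
    · show dist ((f T₁, p T₁ * f' T₁) : ℝ × ℝ) ((g T₁, p T₁ * g' T₁) : ℝ × ℝ) ≤ 0
      rw [Sa.init, Sb.init, Sa.wT₁ hppos, Sb.wT₁ hppos, dist_self]
  have key2 : dist ((f t, p t * f' t) : ℝ × ℝ) ((g t, p t * g' t) : ℝ × ℝ)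
      ≤ (|m tM| * G * (B - T₁) * Real.exp (K * (B - T₁)) + 1) * |a - b| := by
    refine key.trans ?_
    rw [zero_add]
    have h4 : gronwallBound 0 K ε (t - T₁) ≤ ε * (t - T₁) * Real.exp (K * (t - T₁)) :=
      gronwall_simple K.coe_nonneg hε0 (by linarith [ht.1])
    refine h4.trans ?_
    have h5 : ε * (t - T₁) * Real.exp (K * (t - T₁))
        ≤ ε * (B - T₁) * Real.exp (K * (B - T₁)) := by
      have e1 : Real.exp (K * (t - T₁)) ≤ Real.exp (K * (B - T₁)) :=
        Real.exp_le_exp.2 (mul_le_mul_of_nonneg_left (by linarith [ht.2]) K.coe_nonneg)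
      have e2 : ε * (t - T₁) ≤ ε * (B - T₁) := by nlinarith [ht.1, ht.2]
      nlinarith [Real.exp_pos (K * (t - T₁)), mul_nonneg hε0 (sub_nonneg.2 ht.1)]
    refine h5.trans ?_
    rw [hε]
    nlinarith [abs_nonneg (a - b), Real.exp_pos (K * (B - T₁)),
      mul_nonneg (mul_nonneg hM0 (by linarith : (0:ℝ) ≤ G)) (by linarith [ht.1, ht.2] : (0:ℝ) ≤ B - T₁)]
  rw [Prod.dist_eq] at key2
  constructor
  · have h1 : |f t - g t| = dist (f t) (g t) := (Real.dist_eq _ _).symm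
    rw [h1]; exact le_trans (le_max_left _ _) key2
  · have h1 : |p t * f' t - p t * g' t| = dist (p t * f' t) (p t * g' t) :=
      (Real.dist_eq _ _).symm
    rw [h1]; exact le_trans (le_max_right _ _) key2

/-- A nontrivial solution cannot vanish to second order at a point `z > T₁`. -/
lemma IsSol.no_double_zero {f f' : ℝ → ℝ} {a : ℝ} (hp : Continuous p) (hq : Continuous q)
    (hm : Continuous m) (hppos : ∀ t, 0 < p t) (S : IsSol p q m T₁ f f' a) {z : ℝ}
    (hz : T₁ < z) (h0 : f z = 0) (h0' : f' z = 0) : False := by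
  obtain ⟨K, hK⟩ := lipschitz_clamped hp hq hm hppos (A := T₁) (B := z) hz.le (abs_nonneg a)
  have heq : EqOn (fun s => ((f s, p s * f' s) : ℝ × ℝ)) (fun _ => ((0:ℝ), (0:ℝ))) (Icc T₁ z) := by
    apply ODE_solution_unique_of_mem_Icc_left
      (v := fun s x => slV p q m a (clampTo T₁ z s) x) (s := fun _ => univ)
      (fun t _ => (hK a le_rfl t).lipschitzOnWith)
      ((S.contF.prodMk S.contW).continuousOn) ?_ (fun _ _ => trivial)
      continuousOn_const ?_ (fun _ _ => trivial) ?_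
    · intro s hs
      show HasDerivWithinAt _ (slV p q m a (clampTo T₁ z s) (f s, p s * f' s)) (Iic s) s
      rw [clampTo_eq (Ioc_subset_Icc_self hs)]
      exact (S.derivG hppos s).hasDerivWithinAt
    · intro s hs
      show HasDerivWithinAt _ (slV p q m a (clampTo T₁ z s) ((0:ℝ), (0:ℝ))) (Iic s) s
      have hz0 : slV p q m a (clampTo T₁ z s) ((0:ℝ), (0:ℝ)) = ((0:ℝ), (0:ℝ)) := by
        simp [slV]
      rw [hz0]
      exact hasDerivWithinAt_const _ _ _
    · show ((f z, p z * f' z) : ℝ × ℝ) = ((0:ℝ), (0:ℝ))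
      rw [h0, h0', mul_zero]
  have h1 := heq (left_mem_Icc.2 hz.le)
  simp only [Prod.mk.injEq] at h1
  have h2 : p T₁ * f' T₁ = 1 := S.wT₁ hppos
  rw [h1.2] at h2
  exact zero_ne_one h2

lemma IsSol.simple_zero {f f' : ℝ → ℝ} {a : ℝ} (hp : Continuous p) (hq : Continuous q)
    (hm : Continuous m) (hppos : ∀ t, 0 < p t) (S : IsSol p q m T₁ f f' a) {z : ℝ}
    (hz : T₁ < z) (h0 : f z = 0) : f' z ≠ 0 :=
  fun h => S.no_double_zero hp hq hm hppos hz h0 h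

end Gronwall

section SmallA

variable {p q m : ℝ → ℝ} {T₁ : ℝ}

lemma small_a_pos (hp : Continuous p) (hq : Continuous q) (hm : Continuous m)
    (hppos : ∀ t, 0 < p t) (hqnn : ∀ t, 0 ≤ q t) {T₂ : ℝ} (hT : T₁ < T₂) :
    ∃ ε₀ : ℝ, 0 < ε₀ ∧ ∀ (f f' : ℝ → ℝ) (a : ℝ), 0 ≤ a → a ≤ ε₀ →
      IsSol p q m T₁ f f' a → ∀ t ∈ Ioc T₁ T₂, 0 < f t := by
  obtain ⟨G, hG1, hG⟩ := sol_norm_bound hp hq hm hppos (B := T₂) (R := 1) hT.le zero_le_one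
  obtain ⟨tM, htM, hMm⟩ := isCompact_Icc.exists_isMaxOn (nonempty_Icc.2 hT.le)
    (hm.abs.continuousOn : ContinuousOn (fun s => |m s|) (Icc T₁ T₂))
  have hM : ∀ s ∈ Icc T₁ T₂, |m s| ≤ |m tM| := fun s hs => hMm hs
  set X : ℝ := |m tM| * G * (T₂ - T₁) with hX
  have hX0 : 0 ≤ X := by
    have := abs_nonneg (m tM)
    have : (0:ℝ) ≤ |m tM| * G := mul_nonneg (abs_nonneg _) (by linarith)
    nlinarith [hT.le]
  refine ⟨min 1 (1 / (2 * (X + 1))), lt_min one_pos (by positivity), ?_⟩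
  intro f f' a ha0 haε S t ht
  have haR : |a| ≤ 1 := by
    rw [abs_of_nonneg ha0]; exact le_trans haε (min_le_left _ _)
  have hbound := hG f f' a haR S
  have hkey : a * X ≤ 1 / 2 := by
    have h1 : a ≤ 1 / (2 * (X + 1)) := le_trans haε (min_le_right _ _)
    have h2 : a * X ≤ (1 / (2 * (X + 1))) * X := mul_le_mul_of_nonneg_right h1 hX0
    have h3 : (1 / (2 * (X + 1))) * X ≤ 1 / 2 := by
      rw [div_mul_eq_mul_div, one_mul, div_le_div_iff₀ (by positivity) two_pos]
      nlinarith
    linarith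
  -- the momentum stays above 1/2 as long as f stays nonnegative
  have W : ∀ c ∈ Icc T₁ T₂, (∀ s ∈ Icc T₁ c, 0 ≤ f s) →
      ∀ s ∈ Icc T₁ c, 1 / 2 ≤ p s * f' s := by
    intro c hc hnn s hs
    have hT₁s : T₁ ≤ s := hs.1
    have hsT₂ : s ≤ T₂ := le_trans hs.2 hc.2
    have hcont : Continuous (fun τ => q τ * f τ - a * m τ * f τ) :=
      (hq.mul S.contF).sub ((continuous_const.mul hm).mul S.contF)
    have hftc : ∫ τ in T₁..s, (q τ * f τ - a * m τ * f τ)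
        = p s * f' s - p T₁ * f' T₁ :=
      intervalIntegral.integral_eq_sub_of_hasDerivAt (fun τ _ => S.deriv2 τ)
        (hcont.intervalIntegrable _ _)
    have hmono : -(a * (|m tM| * G)) * (s - T₁) ≤ ∫ τ in T₁..s, (q τ * f τ - a * m τ * f τ) := by
      have h7 := intervalIntegral.integral_mono_on (μ := MeasureTheory.volume)
        (f := fun _ => -(a * (|m tM| * G)))
        (g := fun τ => q τ * f τ - a * m τ * f τ) hT₁s (intervalIntegrable_const)
        (hcont.intervalIntegrable _ _) ?_
      · rw [intervalIntegral.integral_const, smul_eq_mul] at h7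
        linarith [h7]
      · intro τ hτ
        show -(a * (|m tM| * G)) ≤ q τ * f τ - a * m τ * f τ
        have hτ2 : τ ∈ Icc T₁ T₂ := ⟨hτ.1, le_trans hτ.2 hsT₂⟩
        have hfτ : 0 ≤ f τ := hnn τ ⟨hτ.1, le_trans hτ.2 hs.2⟩
        have h1 : 0 ≤ q τ * f τ := mul_nonneg (hqnn τ) hfτ
        have h2 : a * m τ * f τ ≤ a * (|m tM| * G) := by
          have hfb : |f τ| ≤ G := (hG f f' a haR S τ hτ2).1
          have hmb : |m τ| ≤ |m tM| := hM τ hτ2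
          have : m τ * f τ ≤ |m tM| * G := by
            calc m τ * f τ ≤ |m τ * f τ| := le_abs_self _
              _ = |m τ| * |f τ| := abs_mul _ _
              _ ≤ |m tM| * G := mul_le_mul hmb hfb (abs_nonneg _) (abs_nonneg _)
          calc a * m τ * f τ = a * (m τ * f τ) := by ring
            _ ≤ a * (|m tM| * G) := mul_le_mul_of_nonneg_left this ha0
        linarith
    have hw1 : p T₁ * f' T₁ = 1 := S.wT₁ hppos
    have hb2 : a * (|m tM| * G) * (s - T₁) ≤ a * X := by
      rw [hX]
      have h5 : a * (|m tM| * G) * (s - T₁) ≤ a * (|m tM| * G) * (T₂ - T₁) := by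
        have : (0:ℝ) ≤ a * (|m tM| * G) :=
          mul_nonneg ha0 (mul_nonneg (abs_nonneg _) (by linarith))
        nlinarith
      nlinarith
    nlinarith [hftc, hmono, hkey]
  -- continuous induction
  set A : Set ℝ := {c | c ∈ Icc T₁ T₂ ∧ ∀ s ∈ Icc T₁ c, 0 ≤ f s} with hA
  have hA1 : T₁ ∈ A := by
    refine ⟨⟨le_rfl, hT.le⟩, fun s hs => ?_⟩
    have : s = T₁ := le_antisymm hs.2 hs.1
    rw [this, S.init]
  have hbdd : BddAbove A := ⟨T₂, fun x hx => hx.1.2⟩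
  set c := sSup A with hc
  have hc1 : T₁ ≤ c := le_csSup hbdd hA1
  have hc2 : c ≤ T₂ := csSup_le ⟨T₁, hA1⟩ fun x hx => hx.1.2
  have hcA' : ∀ s, T₁ ≤ s → s < c → 0 ≤ f s := by
    intro s hsT hsc
    obtain ⟨x, hxA, hsx⟩ := exists_lt_of_lt_csSup ⟨T₁, hA1⟩ hsc
    exact hxA.2 s ⟨hsT, hsx.le⟩
  have h0 : ∀ s ∈ Icc T₁ c, 0 ≤ f s := by
    intro s hs
    rcases lt_or_eq_of_le hs.2 with h | h
    · exact hcA' s hs.1 h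
    · rcases eq_or_lt_of_le hs.1 with h' | h'
      · rw [← h', S.init]
      · have htd : Tendsto f (𝓝[<] s) (𝓝 (f s)) :=
          (S.contF.continuousAt (x := s)).continuousWithinAt.tendsto
        refine ge_of_tendsto htd ?_
        filter_upwards [Ioo_mem_nhdsLT_of_mem (⟨h', le_rfl⟩ : s ∈ Ioc T₁ s)] with x hx
        exact hcA' x hx.1.le (h ▸ hx.2)
  have hcT₂ : c = T₂ := by
    by_contra hne
    have hclt : c < T₂ := lt_of_le_of_ne hc2 hne
    have hwc : 1 / 2 ≤ p c * f' c := W c ⟨hc1, hc2⟩ h0 c ⟨hc1, le_rfl⟩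
    have hev : ∀ᶠ s in nhds c, 1 / 4 < p s * f' s :=
      (S.contW.continuousAt (x := c)).eventually (eventually_gt_nhds (by linarith))
    obtain ⟨η, hη, hball⟩ := Metric.eventually_nhds_iff.1 hev
    set d := min (c + η / 2) T₂ with hd
    have hcd : c < d := lt_min (by linarith) hclt
    have hdT₂ : d ≤ T₂ := min_le_right _ _
    have hwd : ∀ x ∈ Icc c d, 1 / 4 < p x * f' x := by
      intro x hx
      apply hball
      rw [Real.dist_eq, abs_sub_lt_iff]
      constructor
      · have : x ≤ c + η / 2 := le_trans hx.2 (min_le_left _ _)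
        linarith
      · linarith [hx.1]
    have hmono : MonotoneOn f (Icc c d) := by
      apply monotoneOn_of_deriv_nonneg (convex_Icc c d) S.contF.continuousOn
        (fun x _ => (S.deriv x).differentiableAt.differentiableWithinAt)
      intro x hx
      rw [interior_Icc] at hx
      rw [(S.deriv x).deriv]
      have hwx := hwd x (Ioo_subset_Icc_self hx)
      by_contra hcon
      push_neg at hcon
      have := mul_nonpos_of_nonneg_of_nonpos (hppos x).le hcon.le
      linarith
    have hdA : d ∈ A := by
      refine ⟨⟨le_trans hc1 hcd.le, hdT₂⟩, fun s hs => ?_⟩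
      rcases le_or_gt s c with h | h
      · exact h0 s ⟨hs.1, h⟩
      · have := hmono (left_mem_Icc.2 hcd.le) ⟨h.le, hs.2⟩ h.le
        have hfc : 0 ≤ f c := h0 c ⟨hc1, le_rfl⟩
        linarith
    have := le_csSup hbdd hdA
    rw [← hc] at this
    linarith
  -- conclude strict positivity on `Ioc T₁ T₂`
  have hws : ∀ s ∈ Icc T₁ T₂, 1 / 2 ≤ p s * f' s := by
    rw [← hcT₂]
    exact W c ⟨hc1, hc2⟩ h0
  have hstrict : StrictMonoOn f (Icc T₁ T₂) := by
    apply strictMonoOn_of_deriv_pos (convex_Icc T₁ T₂) S.contF.continuousOn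
    intro x hx
    rw [interior_Icc] at hx
    rw [(S.deriv x).deriv]
    have hwx := hws x (Ioo_subset_Icc_self hx)
    by_contra hcon
    push_neg at hcon
    have := mul_nonpos_of_nonneg_of_nonpos (hppos x).le hcon
    linarith
  have := hstrict (left_mem_Icc.2 hT.le) ⟨ht.1.le, ht.2⟩ ht.1
  rwa [S.init] at this

end SmallA

section LargeA

variable {p q m : ℝ → ℝ} {T₁ : ℝ}

lemma large_a_zero (hp : Continuous p) (hq : Continuous q) (hm : Continuous m)
    (hppos : ∀ t, 0 < p t) (hqnn : ∀ t, 0 ≤ q t) {T₂ t₀ : ℝ} (ht₀ : t₀ ∈ Ioo T₁ T₂)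
    (hmt₀ : 0 < m t₀) :
    ∃ A : ℝ, 0 < A ∧ ∀ (f f' : ℝ → ℝ), IsSol p q m T₁ f f' A →
      ∃ z ∈ Ioc T₁ T₂, f z = 0 := by
  set μ : ℝ := m t₀ / 2 with hμdef
  have hμ : 0 < μ := by positivity
  have hUopen : IsOpen (m ⁻¹' Ioi μ ∩ Ioo T₁ T₂) := (isOpen_Ioi.preimage hm).inter isOpen_Ioo
  have ht₀U : t₀ ∈ m ⁻¹' Ioi μ ∩ Ioo T₁ T₂ := ⟨by simp [hμdef]; linarith, ht₀⟩
  obtain ⟨δ, hδ, hball⟩ := Metric.isOpen_iff.1 hUopen t₀ ht₀U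
  set α : ℝ := t₀ - δ / 4 with hα
  set β : ℝ := t₀ + δ / 4 with hβ
  have hαβ : α < β := by rw [hα, hβ]; linarith
  have hsub : Icc α β ⊆ m ⁻¹' Ioi μ ∩ Ioo T₁ T₂ := by
    intro x hx
    apply hball
    rw [Metric.mem_ball, Real.dist_eq, abs_sub_lt_iff]
    rw [hα, hβ] at hx
    constructor <;> [linarith [hx.2]; linarith [hx.1]]
  obtain ⟨tP, htP, hPm⟩ := isCompact_Icc.exists_isMaxOn (nonempty_Icc.2 hαβ.le) hp.continuousOn
  obtain ⟨tC, htC, hCm⟩ := isCompact_Icc.exists_isMaxOn (nonempty_Icc.2 hαβ.le) hq.continuousOn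
  set P : ℝ := p tP with hPd
  set C : ℝ := q tC with hCd
  have hPpos : 0 < P := hppos tP
  have hC0 : 0 ≤ C := hqnn tC
  set L : ℝ := β - α with hL
  have hL0 : 0 < L := by rw [hL]; linarith
  set A : ℝ := (C + Real.pi ^ 2 * P / L ^ 2 + 1) / μ with hAd
  have hA : 0 < A := by positivity
  have hAμ : A * μ = C + Real.pi ^ 2 * P / L ^ 2 + 1 := by
    rw [hAd]; field_simp
  set ρ : ℝ := Real.sqrt (P * (Real.pi ^ 2 * P / L ^ 2 + 1)) with hρd
  have hρarg : 0 < P * (Real.pi ^ 2 * P / L ^ 2 + 1) := by positivity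
  have hρpos : 0 < ρ := Real.sqrt_pos.2 hρarg
  have hρsq : ρ ^ 2 = P * (A * μ - C) := by
    rw [hρd, Real.sq_sqrt hρarg.le, hAμ]; ring
  have key : Real.pi * P < ρ * L := by
    have h1 : (Real.pi * P) ^ 2 < (ρ * L) ^ 2 := by
      have h2 : (ρ * L) ^ 2 = ρ ^ 2 * L ^ 2 := by ring
      rw [h2, hρsq, hAμ]
      have h3 : (C + Real.pi ^ 2 * P / L ^ 2 + 1 - C) = Real.pi ^ 2 * P / L ^ 2 + 1 := by ring
      rw [h3]
      have h4 : P * (Real.pi ^ 2 * P / L ^ 2 + 1) * L ^ 2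
          = Real.pi ^ 2 * P ^ 2 + P * L ^ 2 := by field_simp
      rw [h4]
      nlinarith [mul_pos hPpos (pow_pos hL0 2)]
    exact lt_of_pow_lt_pow_left₀ 2 (mul_pos hρpos hL0).le h1
  refine ⟨A, hA, ?_⟩
  intro f f' S
  by_contra hno
  push_neg at hno
  have hne : ∀ t ∈ Icc α β, f t ≠ 0 := by
    intro t ht
    have := hsub ht
    exact hno t ⟨this.2.1, this.2.2.le⟩
  set r : ℝ → ℝ := fun t => p t * f' t / f t with hr
  have hrd : ∀ t ∈ Icc α β,
      HasDerivAt r (q t - A * m t - (r t) ^ 2 / p t) t := by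
    intro t ht
    have h := (S.deriv2 t).div (S.deriv t) (hne t ht)
    refine h.congr_deriv ?_
    rw [hr]
    field_simp [hne t ht, (hppos t).ne']
  set h : ℝ → ℝ := fun t => Real.arctan (r t / ρ) + ρ / P * t with hh
  have hd : ∀ t ∈ Icc α β, HasDerivAt h
      (1 / (1 + (r t / ρ) ^ 2) * ((q t - A * m t - (r t) ^ 2 / p t) / ρ) + ρ / P) t := by
    intro t ht
    have h1 := (Real.hasDerivAt_arctan (r t / ρ)).comp t ((hrd t ht).div_const ρ)
    have h2 : HasDerivAt (fun s => ρ / P * s) (ρ / P) t := by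
      simpa using (hasDerivAt_id t).const_mul (ρ / P)
    exact h1.add h2
  have hD : ∀ t ∈ Icc α β,
      1 / (1 + (r t / ρ) ^ 2) * ((q t - A * m t - (r t) ^ 2 / p t) / ρ) + ρ / P ≤ 0 := by
    intro t ht
    have htU := hsub ht
    have hmt : μ < m t := htU.1
    have hqt : q t ≤ C := hCm ht
    have hpt : p t ≤ P := hPm ht
    have hppt := hppos t
    set rr := r t with hrr
    have step1 : q t - A * m t - rr ^ 2 / p t ≤ -((ρ ^ 2 + rr ^ 2) / P) := by
      have s1 : A * μ ≤ A * m t := mul_le_mul_of_nonneg_left hmt.le hA.le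
      have s2 : rr ^ 2 / P ≤ rr ^ 2 / p t := by
        apply div_le_div_of_nonneg_left (sq_nonneg rr) hppt hpt
      have s3 : ρ ^ 2 / P = A * μ - C := by
        rw [hρsq]; field_simp
      have s4 : -((ρ ^ 2 + rr ^ 2) / P) = -(ρ ^ 2 / P) - rr ^ 2 / P := by ring
      rw [s4, s3]
      linarith
    have hden : 0 < ρ ^ 2 + rr ^ 2 := by positivity
    have e1 : 1 / (1 + (rr / ρ) ^ 2) * ((q t - A * m t - rr ^ 2 / p t) / ρ)
        = ρ * (q t - A * m t - rr ^ 2 / p t) / (ρ ^ 2 + rr ^ 2) := by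
      field_simp
    have hmain : 1 / (1 + (rr / ρ) ^ 2) * ((q t - A * m t - rr ^ 2 / p t) / ρ) ≤ -(ρ / P) := by
      rw [e1, div_le_iff₀ hden]
      have e2 : ρ * (q t - A * m t - rr ^ 2 / p t) ≤ ρ * (-((ρ ^ 2 + rr ^ 2) / P)) :=
        mul_le_mul_of_nonneg_left step1 hρpos.le
      have e3 : ρ * (-((ρ ^ 2 + rr ^ 2) / P)) = -(ρ / P) * (ρ ^ 2 + rr ^ 2) := by
        field_simp
      linarith
    linarith
  have hanti : AntitoneOn h (Icc α β) := by
    apply antitoneOn_of_deriv_nonpos (convex_Icc α β)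
    · exact continuousOn_of_forall_continuousAt fun t ht => (hd t ht).continuousAt
    · intro t ht
      rw [interior_Icc] at ht
      exact (hd t (Ioo_subset_Icc_self ht)).differentiableAt.differentiableWithinAt
    · intro t ht
      rw [interior_Icc] at ht
      rw [(hd t (Ioo_subset_Icc_self ht)).deriv]
      exact hD t (Ioo_subset_Icc_self ht)
  have hba : h β ≤ h α := hanti (left_mem_Icc.2 hαβ.le) (right_mem_Icc.2 hαβ.le) hαβ.le
  have harc1 := Real.arctan_lt_pi_div_two (r α / ρ)
  have harc2 := Real.neg_pi_div_two_lt_arctan (r β / ρ)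
  have hkey2 : Real.pi < ρ / P * (β - α) := by
    rw [div_mul_eq_mul_div, lt_div_iff₀ hPpos]
    rw [hL] at key
    linarith
  rw [hh] at hba
  simp only at hba
  linarith

section Helpers

lemma tendsto_div_sub {f : ℝ → ℝ} {d z : ℝ} (hf : HasDerivAt f d z) (h0 : f z = 0) :
    Filter.Tendsto (fun t => f t / (t - z)) (nhdsWithin z {z}ᶜ) (nhds d) := by
  have h := hasDerivAt_iff_tendsto_slope.1 hf
  refine h.congr fun t => ?_
  rw [slope_def_field, h0, sub_zero]

end Helpers

section Picone

variable {p q m : ℝ → ℝ} {T₁ : ℝ}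

lemma picone {T₂ : ℝ} (hp : Continuous p) (hq : Continuous q) (hm : Continuous m)
    (hppos : ∀ t, 0 < p t) (hqnn : ∀ t, 0 ≤ q t) (hT : T₁ < T₂)
    {f f' g g' : ℝ → ℝ} {a b : ℝ} (Sa : IsSol p q m T₁ f f' a) (Sb : IsSol p q m T₁ g g' b)
    (hab : a < b) (ha : 0 < a) (hfT₂ : f T₂ = 0) (hgT₂ : g T₂ = 0)
    (hgne : ∀ t ∈ Ioo T₁ T₂, g t ≠ 0) : False := by
  have hcf : Continuous f := Sa.contF
  have hcg : Continuous g := Sb.contF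
  have hcf' : Continuous f' := Sa.contF' hp hppos
  have hcg' : Continuous g' := Sb.contF' hp hppos
  set F : ℝ → ℝ := fun t => f t * (p t * f' t) - (f t) ^ 2 * (p t * g' t) / g t with hFd
  set D : ℝ → ℝ := fun t =>
    p t * (f' t - f t * g' t / g t) ^ 2 + (b - a) * (m t * (f t) ^ 2) with hDd
  -- derivative of F on the open interval
  have FD : ∀ t ∈ Ioo T₁ T₂, HasDerivAt F (D t) t := by
    intro t ht
    have hgt := hgne t ht
    have h1 := (Sa.deriv t).mul (Sa.deriv2 t)
    have h2 : HasDerivAt (fun s => (f s) ^ 2) (2 * f t * f' t) t := by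
      have := (Sa.deriv t).fun_pow 2
      simpa [mul_comm] using this
    have h3 := h2.mul (Sb.deriv2 t)
    have h4 := h3.div (Sb.deriv t) hgt
    have h5 := h1.sub h4
    refine h5.congr_deriv ?_
    simp only [Pi.mul_apply]
    rw [hDd]
    field_simp [hgt, (hppos t).ne']
    ring
  -- continuity of D away from zeros of g
  have hDc : ∀ α β, T₁ < α → β < T₂ → ContinuousOn D (Icc α β) := by
    intro α β hα hβ
    have hsub : Icc α β ⊆ Ioo T₁ T₂ := fun x hx => ⟨lt_of_lt_of_le hα hx.1, lt_of_le_of_lt hx.2 hβ⟩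
    have hgne' : ∀ x ∈ Icc α β, g x ≠ 0 := fun x hx => hgne x (hsub hx)
    apply ContinuousOn.add
    · apply ContinuousOn.mul hp.continuousOn
      apply ContinuousOn.pow
      exact hcf'.continuousOn.sub (((hcf.mul hcg').continuousOn).div hcg.continuousOn hgne')
    · exact (continuous_const.mul (hm.mul (hcf.pow 2))).continuousOn
  -- fundamental inequality on compact subintervals
  have FTCstep : ∀ α β, T₁ < α → α ≤ β → β < T₂ →
      (b - a) * ∫ t in α..β, m t * (f t) ^ 2 ≤ F β - F α := by
    intro α β hα hαβ hβ
    have hsub : Icc α β ⊆ Ioo T₁ T₂ := fun x hx => ⟨lt_of_lt_of_le hα hx.1, lt_of_le_of_lt hx.2 hβ⟩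
    have hI : uIcc α β = Icc α β := uIcc_of_le hαβ
    have hDcab := hDc α β hα hβ
    have hDint : IntervalIntegrable D MeasureTheory.volume α β := by
      apply ContinuousOn.intervalIntegrable
      rwa [hI]
    have hftc : ∫ t in α..β, D t = F β - F α :=
      intervalIntegral.integral_eq_sub_of_hasDerivAt (fun t ht => FD t (hsub (hI ▸ ht))) hDint
    have hPc : ContinuousOn (fun t => p t * (f' t - f t * g' t / g t) ^ 2) (Icc α β) := by
      have hgne' : ∀ x ∈ Icc α β, g x ≠ 0 := fun x hx => hgne x (hsub hx)
      apply ContinuousOn.mul hp.continuousOn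
      apply ContinuousOn.pow
      exact hcf'.continuousOn.sub (((hcf.mul hcg').continuousOn).div hcg.continuousOn hgne')
    have hPint : IntervalIntegrable (fun t => p t * (f' t - f t * g' t / g t) ^ 2)
        MeasureTheory.volume α β := by
      apply ContinuousOn.intervalIntegrable; rwa [hI]
    have hRint : IntervalIntegrable (fun t => (b - a) * (m t * (f t) ^ 2))
        MeasureTheory.volume α β :=
      (continuous_const.mul (hm.mul (hcf.pow 2))).intervalIntegrable _ _
    have hsplit : ∫ t in α..β, D t
        = (∫ t in α..β, p t * (f' t - f t * g' t / g t) ^ 2)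
          + ∫ t in α..β, (b - a) * (m t * (f t) ^ 2) := by
      have hrfl : ∫ t in α..β, D t = ∫ t in α..β,
          (p t * (f' t - f t * g' t / g t) ^ 2 + (b - a) * (m t * (f t) ^ 2)) := rfl
      rw [hrfl, intervalIntegral.integral_add hPint hRint]
    have hP0 : 0 ≤ ∫ t in α..β, p t * (f' t - f t * g' t / g t) ^ 2 :=
      intervalIntegral.integral_nonneg hαβ fun x _ =>
        mul_nonneg (hppos x).le (sq_nonneg _)
    have hconst : ∫ t in α..β, (b - a) * (m t * (f t) ^ 2)
        = (b - a) * ∫ t in α..β, m t * (f t) ^ 2 :=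
      intervalIntegral.integral_const_mul _ _
    rw [hftc, hconst] at hsplit
    rw [hsplit]
    linarith [hP0]
  -- boundary limits of F
  have hg'T₂ : g' T₂ ≠ 0 := Sb.simple_zero hp hq hm hppos hT hgT₂
  have hg'T₁ : g' T₁ ≠ 0 := by rw [Sb.init']; exact one_div_ne_zero (hppos T₁).ne'
  have hF1 : Filter.Tendsto F (nhdsWithin T₁ (Ioi T₁)) (nhds 0) := by
    have hmono : nhdsWithin T₁ (Ioi T₁) ≤ nhdsWithin T₁ {T₁}ᶜ :=
      nhdsWithin_mono _ fun x hx => ne_of_gt hx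
    have hsf : Filter.Tendsto (fun t => f t / (t - T₁)) (nhdsWithin T₁ (Ioi T₁)) (nhds (f' T₁)) :=
      (tendsto_div_sub (Sa.deriv T₁) Sa.init).mono_left hmono
    have hsg : Filter.Tendsto (fun t => g t / (t - T₁)) (nhdsWithin T₁ (Ioi T₁)) (nhds (g' T₁)) :=
      (tendsto_div_sub (Sb.deriv T₁) Sb.init).mono_left hmono
    have hinv : Filter.Tendsto (fun t => (t - T₁) / g t) (nhdsWithin T₁ (Ioi T₁))
        (nhds ((g' T₁)⁻¹)) := by
      have := hsg.inv₀ hg'T₁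
      refine this.congr fun t => ?_
      rw [inv_div]
    have htz : Filter.Tendsto (fun t : ℝ => t - T₁) (nhdsWithin T₁ (Ioi T₁)) (nhds 0) := by
      have : Filter.Tendsto (fun t : ℝ => t - T₁) (nhds T₁) (nhds (T₁ - T₁)) :=
        (continuous_id.sub continuous_const).tendsto T₁
      rw [sub_self] at this
      exact this.mono_left nhdsWithin_le_nhds
    have hwg : Filter.Tendsto (fun t => p t * g' t) (nhdsWithin T₁ (Ioi T₁))
        (nhds (p T₁ * g' T₁)) := (Sb.contW.tendsto T₁).mono_left nhdsWithin_le_nhds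
    have hwf : Filter.Tendsto (fun t => f t * (p t * f' t)) (nhdsWithin T₁ (Ioi T₁))
        (nhds (f T₁ * (p T₁ * f' T₁))) :=
      ((hcf.mul Sa.contW).tendsto T₁).mono_left nhdsWithin_le_nhds
    have hterm2 : Filter.Tendsto (fun t => (f t / (t - T₁)) ^ 2 * ((t - T₁) / g t)
        * ((t - T₁) * (p t * g' t))) (nhdsWithin T₁ (Ioi T₁)) (nhds 0) := by
      have := (((hsf.pow 2).mul hinv).mul (htz.mul hwg))
      simpa using this
    have hEq : ∀ᶠ t in nhdsWithin T₁ (Ioi T₁),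
        f t * (p t * f' t) - (f t / (t - T₁)) ^ 2 * ((t - T₁) / g t)
          * ((t - T₁) * (p t * g' t)) = F t := by
      filter_upwards [Ioo_mem_nhdsGT_of_mem (⟨le_rfl, hT⟩ : T₁ ∈ Ico T₁ T₂)] with t ht
      rw [hFd]
      have h1 : t - T₁ ≠ 0 := sub_ne_zero.2 (ne_of_gt ht.1)
      have h2 : g t ≠ 0 := hgne t ht
      field_simp
    have := (hwf.sub hterm2).congr' hEq
    rw [Sa.init] at this
    simpa using this
  have hF2 : Filter.Tendsto F (nhdsWithin T₂ (Iio T₂)) (nhds 0) := by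
    have hmono : nhdsWithin T₂ (Iio T₂) ≤ nhdsWithin T₂ {T₂}ᶜ :=
      nhdsWithin_mono _ fun x hx => ne_of_lt hx
    have hsf : Filter.Tendsto (fun t => f t / (t - T₂)) (nhdsWithin T₂ (Iio T₂)) (nhds (f' T₂)) :=
      (tendsto_div_sub (Sa.deriv T₂) hfT₂).mono_left hmono
    have hsg : Filter.Tendsto (fun t => g t / (t - T₂)) (nhdsWithin T₂ (Iio T₂)) (nhds (g' T₂)) :=
      (tendsto_div_sub (Sb.deriv T₂) hgT₂).mono_left hmono
    have hinv : Filter.Tendsto (fun t => (t - T₂) / g t) (nhdsWithin T₂ (Iio T₂))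
        (nhds ((g' T₂)⁻¹)) := by
      have := hsg.inv₀ hg'T₂
      refine this.congr fun t => ?_
      rw [inv_div]
    have htz : Filter.Tendsto (fun t : ℝ => t - T₂) (nhdsWithin T₂ (Iio T₂)) (nhds 0) := by
      have : Filter.Tendsto (fun t : ℝ => t - T₂) (nhds T₂) (nhds (T₂ - T₂)) :=
        (continuous_id.sub continuous_const).tendsto T₂
      rw [sub_self] at this
      exact this.mono_left nhdsWithin_le_nhds
    have hwg : Filter.Tendsto (fun t => p t * g' t) (nhdsWithin T₂ (Iio T₂))
        (nhds (p T₂ * g' T₂)) := (Sb.contW.tendsto T₂).mono_left nhdsWithin_le_nhds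
    have hwf : Filter.Tendsto (fun t => f t * (p t * f' t)) (nhdsWithin T₂ (Iio T₂))
        (nhds (f T₂ * (p T₂ * f' T₂))) :=
      ((hcf.mul Sa.contW).tendsto T₂).mono_left nhdsWithin_le_nhds
    have hterm2 : Filter.Tendsto (fun t => (f t / (t - T₂)) ^ 2 * ((t - T₂) / g t)
        * ((t - T₂) * (p t * g' t))) (nhdsWithin T₂ (Iio T₂)) (nhds 0) := by
      have := (((hsf.pow 2).mul hinv).mul (htz.mul hwg))
      simpa using this
    have hEq : ∀ᶠ t in nhdsWithin T₂ (Iio T₂),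
        f t * (p t * f' t) - (f t / (t - T₂)) ^ 2 * ((t - T₂) / g t)
          * ((t - T₂) * (p t * g' t)) = F t := by
      filter_upwards [Ioo_mem_nhdsLT_of_mem (⟨hT, le_rfl⟩ : T₂ ∈ Ioc T₁ T₂)] with t ht
      rw [hFd]
      have h1 : t - T₂ ≠ 0 := sub_ne_zero.2 (ne_of_lt ht.2)
      have h2 : g t ≠ 0 := hgne t ht
      field_simp
    have := (hwf.sub hterm2).congr' hEq
    rw [hfT₂] at this
    simpa using this
  -- the sequences of endpoints
  set e : ℕ → ℝ := fun n => (T₂ - T₁) / (n + 3) with hed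
  have hepos : ∀ n, 0 < e n := by
    intro n
    apply div_pos (by linarith) (by positivity)
  have helt : ∀ n, 2 * e n < T₂ - T₁ := by
    intro n
    have hn3 : (0:ℝ) < (n:ℝ) + 3 := by positivity
    rw [hed]
    simp only
    rw [← mul_div_assoc, div_lt_iff₀ hn3]
    nlinarith [Nat.cast_nonneg (α := ℝ) n, hT]
  have het : Filter.Tendsto e Filter.atTop (nhds 0) := by
    rw [hed]
    have h1 : Filter.Tendsto (fun n : ℕ => ((n:ℝ) + 3)) Filter.atTop Filter.atTop :=
      Filter.tendsto_atTop_add_const_right _ 3 tendsto_natCast_atTop_atTop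
    exact Filter.Tendsto.div_atTop tendsto_const_nhds h1
  set al : ℕ → ℝ := fun n => T₁ + e n with hald
  set be : ℕ → ℝ := fun n => T₂ - e n with hbed
  have hal : ∀ n, T₁ < al n := fun n => by have := hepos n; rw [hald]; simp only; linarith
  have hbe : ∀ n, be n < T₂ := fun n => by have := hepos n; rw [hbed]; simp only; linarith
  have halbe : ∀ n, al n ≤ be n := fun n => by
    have := helt n; rw [hald, hbed]; simp only; linarith
  have halt : Filter.Tendsto al Filter.atTop (nhdsWithin T₁ (Ioi T₁)) := by
    apply tendsto_nhdsWithin_of_tendsto_nhds_of_eventually_within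
    · have : Filter.Tendsto al Filter.atTop (nhds (T₁ + 0)) :=
        Filter.Tendsto.const_add _ het
      simpa using this
    · exact Filter.Eventually.of_forall fun n => hal n
  have hbet : Filter.Tendsto be Filter.atTop (nhdsWithin T₂ (Iio T₂)) := by
    apply tendsto_nhdsWithin_of_tendsto_nhds_of_eventually_within
    · have : Filter.Tendsto be Filter.atTop (nhds (T₂ - 0)) :=
        Filter.Tendsto.const_sub _ het
      simpa using this
    · exact Filter.Eventually.of_forall fun n => hbe n
  have hlhs : Filter.Tendsto (fun n => F (be n) - F (al n)) Filter.atTop (nhds 0) := by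
    have := (hF2.comp hbet).sub (hF1.comp halt)
    simpa using this
  -- convergence of the truncated integrals
  set I : ℝ := ∫ t in T₁..T₂, m t * (f t) ^ 2 with hId
  have hmfc : Continuous (fun t => m t * (f t) ^ 2) := hm.mul (hcf.pow 2)
  obtain ⟨tc, htc, hMc⟩ := isCompact_Icc.exists_isMaxOn (nonempty_Icc.2 hT.le)
    ((hmfc.abs).continuousOn : ContinuousOn (fun t => |m t * (f t) ^ 2|) (Icc T₁ T₂))
  set Mc : ℝ := |m tc * (f tc) ^ 2| with hMcd
  have hMc0 : 0 ≤ Mc := abs_nonneg _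
  have hintn : Filter.Tendsto (fun n => ∫ t in al n..be n, m t * (f t) ^ 2)
      Filter.atTop (nhds I) := by
    have hbound : ∀ n, ‖(∫ t in al n..be n, m t * (f t) ^ 2) - I‖ ≤ 2 * Mc * e n := by
      intro n
      have h1 : (∫ t in T₁..al n, m t * (f t) ^ 2) + ∫ t in al n..be n, m t * (f t) ^ 2
          = ∫ t in T₁..be n, m t * (f t) ^ 2 :=
        intervalIntegral.integral_add_adjacent_intervals (μ := MeasureTheory.volume)
          (hmfc.intervalIntegrable _ _) (hmfc.intervalIntegrable _ _)
      have h2 : (∫ t in T₁..be n, m t * (f t) ^ 2) + ∫ t in be n..T₂, m t * (f t) ^ 2 = I :=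
        intervalIntegral.integral_add_adjacent_intervals (μ := MeasureTheory.volume)
          (hmfc.intervalIntegrable _ _) (hmfc.intervalIntegrable _ _)
      have hb1 : ‖∫ t in T₁..al n, m t * (f t) ^ 2‖ ≤ Mc * |al n - T₁| := by
        apply intervalIntegral.norm_integral_le_of_norm_le_const
        intro x hx
        have hx2 : x ∈ Icc T₁ T₂ := by
          rcases le_or_gt T₁ (al n) with h | h
          · have := Ioc_subset_Icc_self ((uIoc_of_le h) ▸ hx)
            constructor
            · exact this.1
            · refine le_trans this.2 ?_
              have := helt n; have := hepos n
              rw [hald]; simp only; linarith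
          · exact absurd h (not_lt.2 (hal n).le)
        rw [Real.norm_eq_abs]
        exact hMc hx2
      have hb2 : ‖∫ t in be n..T₂, m t * (f t) ^ 2‖ ≤ Mc * |T₂ - be n| := by
        apply intervalIntegral.norm_integral_le_of_norm_le_const
        intro x hx
        have hx2 : x ∈ Icc T₁ T₂ := by
          have hb : be n ≤ T₂ := (hbe n).le
          have := Ioc_subset_Icc_self ((uIoc_of_le hb) ▸ hx)
          constructor
          · refine le_trans ?_ this.1
            have := helt n; have := hepos n
            rw [hbed]; simp only; linarith
          · exact this.2
        rw [Real.norm_eq_abs]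
        exact hMc hx2
      have he1 : |al n - T₁| = e n := by
        rw [hald]; simp only; rw [show T₁ + e n - T₁ = e n by ring, abs_of_pos (hepos n)]
      have he2 : |T₂ - be n| = e n := by
        rw [hbed]; simp only; rw [show T₂ - (T₂ - e n) = e n by ring, abs_of_pos (hepos n)]
      rw [he1] at hb1
      rw [he2] at hb2
      have : (∫ t in al n..be n, m t * (f t) ^ 2) - I
          = -(∫ t in T₁..al n, m t * (f t) ^ 2) - (∫ t in be n..T₂, m t * (f t) ^ 2) := by
        rw [← h2, ← h1]; ring
      rw [this]
      rw [Real.norm_eq_abs] at *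
      calc |-(∫ t in T₁..al n, m t * (f t) ^ 2) - ∫ t in be n..T₂, m t * (f t) ^ 2|
          ≤ |∫ t in T₁..al n, m t * (f t) ^ 2| + |∫ t in be n..T₂, m t * (f t) ^ 2| := by
            rw [show -(∫ t in T₁..al n, m t * (f t) ^ 2) - ∫ t in be n..T₂, m t * (f t) ^ 2
              = -((∫ t in T₁..al n, m t * (f t) ^ 2) + ∫ t in be n..T₂, m t * (f t) ^ 2) by ring,
              abs_neg]
            exact abs_add_le _ _
        _ ≤ 2 * Mc * e n := by linarith
    have hz : Filter.Tendsto (fun n => 2 * Mc * e n) Filter.atTop (nhds 0) := by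
      have := het.const_mul (2 * Mc)
      simpa using this
    have := squeeze_zero_norm hbound hz
    have h3 := this.add_const I
    simpa using h3
  have hrhs : Filter.Tendsto (fun n => (b - a) * ∫ t in al n..be n, m t * (f t) ^ 2)
      Filter.atTop (nhds ((b - a) * I)) := hintn.const_mul _
  have hmainle : (b - a) * I ≤ 0 :=
    le_of_tendsto_of_tendsto' hrhs hlhs fun n => FTCstep (al n) (be n) (hal n) (halbe n) (hbe n)
  -- energy identity for f
  have hEc : Continuous (fun t => f' t * (p t * f' t) + f t * (q t * f t - a * m t * f t)) :=
    (hcf'.mul Sa.contW).add (hcf.mul ((hq.mul hcf).sub ((continuous_const.mul hm).mul hcf)))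
  have hE : ∫ t in T₁..T₂, (f' t * (p t * f' t) + f t * (q t * f t - a * m t * f t)) = 0 := by
    have := intervalIntegral.integral_eq_sub_of_hasDerivAt (a := T₁) (b := T₂)
      (f := fun t => f t * (p t * f' t))
      (f' := fun t => f' t * (p t * f' t) + f t * (q t * f t - a * m t * f t))
      (fun t _ => (Sa.deriv t).mul (Sa.deriv2 t)) (hEc.intervalIntegrable _ _)
    rw [this]
    simp only [hfT₂, Sa.init]
    ring
  have hEc1 : Continuous (fun t => p t * (f' t) ^ 2 + q t * (f t) ^ 2) :=
    (hp.mul (hcf'.pow 2)).add (hq.mul (hcf.pow 2))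
  have hE2 : ∫ t in T₁..T₂, (p t * (f' t) ^ 2 + q t * (f t) ^ 2) = a * I := by
    have hsub : ∫ t in T₁..T₂, (f' t * (p t * f' t) + f t * (q t * f t - a * m t * f t))
        = (∫ t in T₁..T₂, (p t * (f' t) ^ 2 + q t * (f t) ^ 2))
          - ∫ t in T₁..T₂, a * (m t * (f t) ^ 2) := by
      rw [← intervalIntegral.integral_sub (hEc1.intervalIntegrable _ _)
        ((show Continuous (fun t => a * (m t * (f t) ^ 2)) from continuous_const.mul hmfc).intervalIntegrable _ _)]
      apply intervalIntegral.integral_congr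
      intro x _
      simp only
      ring
    rw [hsub] at hE
    have hconst : ∫ t in T₁..T₂, a * (m t * (f t) ^ 2) = a * I :=
      intervalIntegral.integral_const_mul _ _
    rw [hconst] at hE
    linarith
  -- positivity of the energy
  have hf'T₁ : 0 < f' T₁ := by rw [Sa.init']; exact one_div_pos.2 (hppos T₁)
  have hev : ∀ᶠ s in nhds T₁, 0 < f' s :=
    (hcf'.continuousAt (x := T₁)).eventually (eventually_gt_nhds hf'T₁)
  obtain ⟨η, hη, hballf⟩ := Metric.eventually_nhds_iff.1 hev
  set d : ℝ := min (T₁ + η / 2) T₂ with hdd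
  have hdT₁ : T₁ < d := lt_min (by linarith) hT
  have hdT₂ : d ≤ T₂ := min_le_right _ _
  have hf'pos : ∀ x ∈ Icc T₁ d, 0 < f' x := by
    intro x hx
    apply hballf
    rw [Real.dist_eq, abs_sub_lt_iff]
    have : x ≤ T₁ + η / 2 := le_trans hx.2 (min_le_left _ _)
    constructor <;> [linarith; linarith [hx.1]]
  have hEpos : 0 < ∫ t in T₁..T₂, (p t * (f' t) ^ 2 + q t * (f t) ^ 2) := by
    have hadj : (∫ t in T₁..d, (p t * (f' t) ^ 2 + q t * (f t) ^ 2))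
        + ∫ t in d..T₂, (p t * (f' t) ^ 2 + q t * (f t) ^ 2)
        = ∫ t in T₁..T₂, (p t * (f' t) ^ 2 + q t * (f t) ^ 2) :=
      intervalIntegral.integral_add_adjacent_intervals (μ := MeasureTheory.volume)
        (hEc1.intervalIntegrable _ _) (hEc1.intervalIntegrable _ _)
    have h1 : 0 < ∫ t in T₁..d, (p t * (f' t) ^ 2 + q t * (f t) ^ 2) := by
      apply intervalIntegral.intervalIntegral_pos_of_pos_on (hEc1.intervalIntegrable _ _)
        _ hdT₁
      intro x hx
      have hf'x := hf'pos x (Ioo_subset_Icc_self hx)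
      have h2 : 0 < p x * (f' x) ^ 2 := mul_pos (hppos x) (pow_pos hf'x 2)
      have h3 : 0 ≤ q x * (f x) ^ 2 := mul_nonneg (hqnn x) (sq_nonneg _)
      linarith
    have h2 : 0 ≤ ∫ t in d..T₂, (p t * (f' t) ^ 2 + q t * (f t) ^ 2) :=
      intervalIntegral.integral_nonneg hdT₂ fun x _ =>
        add_nonneg (mul_nonneg (hppos x).le (sq_nonneg _)) (mul_nonneg (hqnn x) (sq_nonneg _))
    linarith
  have hI0 : 0 < I := by nlinarith
  nlinarith

end Picone

lemma straddle {f : ℝ → ℝ} {d z : ℝ} (hf : HasDerivAt f d z) (h0 : f z = 0) (hd : d ≠ 0) :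
    ∀ ε > 0, ∃ z₁ ∈ Ioo (z - ε) z, ∃ z₂ ∈ Ioo z (z + ε), f z₁ * f z₂ < 0 := by
  intro ε hε
  have h := tendsto_div_sub hf h0
  have hopen : {x : ℝ | 0 < x * d} ∈ nhds d := by
    apply IsOpen.mem_nhds
    · exact isOpen_lt continuous_const (continuous_id.mul continuous_const)
    · show 0 < d * d
      rcases lt_or_gt_of_ne hd with h' | h'
      · nlinarith
      · nlinarith
  have hev : ∀ᶠ t in nhdsWithin z {z}ᶜ, 0 < (f t / (t - z)) * d := h.eventually hopen
  have hmL : nhdsWithin z (Iio z) ≤ nhdsWithin z {z}ᶜ :=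
    nhdsWithin_mono _ fun x hx => ne_of_lt hx
  have hmR : nhdsWithin z (Ioi z) ≤ nhdsWithin z {z}ᶜ :=
    nhdsWithin_mono _ fun x hx => ne_of_gt hx
  have hL : ∀ᶠ t in nhdsWithin z (Iio z), 0 < (f t / (t - z)) * d ∧ t ∈ Ioo (z - ε) z := by
    refine ((hev.filter_mono hmL).and ?_).mono fun t ht => ht
    exact Ioo_mem_nhdsLT_of_mem ⟨by linarith, le_rfl⟩
  have hR : ∀ᶠ t in nhdsWithin z (Ioi z), 0 < (f t / (t - z)) * d ∧ t ∈ Ioo z (z + ε) := by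
    refine ((hev.filter_mono hmR).and ?_).mono fun t ht => ht
    exact Ioo_mem_nhdsGT_of_mem ⟨le_rfl, by linarith⟩
  obtain ⟨z₁, hq1, hz₁⟩ := hL.exists
  obtain ⟨z₂, hq2, hz₂⟩ := hR.exists
  refine ⟨z₁, hz₁, z₂, hz₂, ?_⟩
  have hs₁ : z₁ - z < 0 := sub_neg.2 hz₁.2
  have hs₂ : 0 < z₂ - z := sub_pos.2 hz₂.1
  have hfd₁ : f z₁ * d < 0 := by
    have h6 : f z₁ / (z₁ - z) * d * (z₁ - z) < 0 := mul_neg_of_pos_of_neg hq1 hs₁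
    have h7 : f z₁ / (z₁ - z) * d * (z₁ - z) = f z₁ * d := by
      field_simp [sub_ne_zero.2 (ne_of_lt hz₁.2)]
    linarith [h7 ▸ h6]
  have hfd₂ : 0 < f z₂ * d := by
    have h6 : 0 < f z₂ / (z₂ - z) * d * (z₂ - z) := mul_pos hq2 hs₂
    have h7 : f z₂ / (z₂ - z) * d * (z₂ - z) = f z₂ * d := by
      field_simp [sub_ne_zero.2 (ne_of_gt hz₂.1)]
    linarith [h7 ▸ h6]
  nlinarith [mul_neg_of_neg_of_pos hfd₁ hfd₂, mul_self_nonneg d]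

set_option maxHeartbeats 3000000 in
/-- If `m⁺ ≢ 0` on `(T₁,T₂)`, there is exactly one `a > 0` such
that `φ_a(T₁) = T₂`; moreover for this `a`, the solution `u a` is a Dirichlet
eigenfunction on `(T₁,T₂)` with no interior zero, i.e. `a = λ₁^m`, the first
positive eigenvalue of `-(p u')' + q u = λ·m·u`, `u(T₁)=u(T₂)=0`. -/
theorem first_positive_eigenvalue
    (p q m : ℝ → ℝ) (T₁ T₂ : ℝ) (u u' : ℝ → ℝ → ℝ)
    (hp : Continuous p) (hq : Continuous q) (hm : Continuous m)
    (hppos : ∀ t, 0 < p t) (hqnn : ∀ t, 0 ≤ q t)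
    (hT : T₁ < T₂)
    (hmplus : ∃ t ∈ Ioo T₁ T₂, 0 < m t)
    (hsol : ∀ a : ℝ, u a T₁ = 0 ∧ u' a T₁ = 1 / p T₁ ∧
      ∀ t, HasDerivAt (u a) (u' a t) t ∧
        HasDerivAt (fun τ => p τ * u' a τ) (q t * u a t - a * m t * u a t) t) :
    ∃ a : ℝ,
      (0 < a ∧ {t | T₁ < t ∧ u a t = 0}.Nonempty ∧
        sInf {t | T₁ < t ∧ u a t = 0} = T₂) ∧
      (∀ a' : ℝ, 0 < a' → {t | T₁ < t ∧ u a' t = 0}.Nonempty →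
        sInf {t | T₁ < t ∧ u a' t = 0} = T₂ → a' = a) ∧
      u a T₂ = 0 ∧ (∀ t ∈ Ioo T₁ T₂, u a t ≠ 0) := by
  have hS : ∀ a : ℝ, IsSol p q m T₁ (u a) (u' a) a := by
    intro a
    obtain ⟨h1, h2, h3⟩ := hsol a
    exact ⟨h1, h2, fun t => (h3 t).1, fun t => (h3 t).2⟩
  obtain ⟨t₀, ht₀, hmt₀⟩ := hmplus
  obtain ⟨ε₀, hε₀, hsmall⟩ := small_a_pos hp hq hm hppos hqnn hT
  obtain ⟨A, hA, hlarge⟩ := large_a_zero hp hq hm hppos hqnn ht₀ hmt₀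
  set S : Set ℝ := {a | 0 < a ∧ ∃ t ∈ Ioc T₁ T₂, u a t = 0} with hSd
  have hAS : A ∈ S := ⟨hA, hlarge (u A) (u' A) (hS A)⟩
  have hSlb : ∀ a ∈ S, ε₀ < a := by
    intro a haS
    by_contra hcon
    push_neg at hcon
    obtain ⟨t, ht, h0⟩ := haS.2
    have := hsmall (u a) (u' a) a haS.1.le hcon (hS a) t ht
    rw [h0] at this
    exact lt_irrefl 0 this
  set astar : ℝ := sInf S with hastard
  have hbdd : BddBelow S := ⟨ε₀, fun a ha => (hSlb a ha).le⟩
  have hastar_lb : ε₀ ≤ astar := le_csInf ⟨A, hAS⟩ fun a ha => (hSlb a ha).le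
  have hastar_pos : 0 < astar := lt_of_lt_of_le hε₀ hastar_lb
  have hastarA : astar ≤ A := csInf_le hbdd hAS
  obtain ⟨C, hC, hCd⟩ := param_dist hp hq hm hppos (T₁ := T₁) (B := T₂) (R := A + 1)
    hT.le (by linarith)
  have hRastar : |astar| ≤ A + 1 := by
    rw [abs_of_pos hastar_pos]; linarith
  -- no zero of `u astar` inside the open interval
  have hnozero : ∀ t ∈ Ioo T₁ T₂, u astar t ≠ 0 := by
    intro z hz h0
    have hder : u' astar z ≠ 0 := (hS astar).simple_zero hp hq hm hppos hz.1 h0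
    set ε : ℝ := min (z - T₁) (T₂ - z) with hεd
    have hεpos : 0 < ε := lt_min (by linarith [hz.1]) (by linarith [hz.2])
    obtain ⟨z₁, hz₁, z₂, hz₂, hzz⟩ := straddle ((hS astar).deriv z) h0 hder ε hεpos
    have hz₁T : T₁ < z₁ := by
      have : z - ε ≥ T₁ := by
        have := min_le_left (z - T₁) (T₂ - z); rw [← hεd] at this; linarith
      linarith [hz₁.1]
    have hz₂T : z₂ < T₂ := by
      have : z + ε ≤ T₂ := by
        have := min_le_right (z - T₁) (T₂ - z); rw [← hεd] at this; linarith
      linarith [hz₂.2]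
    have hz₁Icc : z₁ ∈ Icc T₁ T₂ := ⟨hz₁T.le, by linarith [hz₁.2, hz.2]⟩
    have hz₂Icc : z₂ ∈ Icc T₁ T₂ := ⟨by linarith [hz₂.1, hz.1], hz₂T.le⟩
    have hs₁ne : u astar z₁ ≠ 0 := fun h => by rw [h] at hzz; simp at hzz
    have hs₂ne : u astar z₂ ≠ 0 := fun h => by rw [h] at hzz; simp at hzz
    set η : ℝ := min |u astar z₁| |u astar z₂| with hηd
    have hη : 0 < η := lt_min (abs_pos.2 hs₁ne) (abs_pos.2 hs₂ne)
    set a : ℝ := astar - min (η / (2 * C)) (astar / 2) with had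
    have hminpos : 0 < min (η / (2 * C)) (astar / 2) :=
      lt_min (by positivity) (by positivity)
    have ha_pos : 0 < a := by
      have := min_le_right (η / (2 * C)) (astar / 2)
      rw [had]; linarith
    have ha_lt : a < astar := by rw [had]; linarith
    have hRa : |a| ≤ A + 1 := by
      rw [abs_of_pos ha_pos, had]; linarith [hminpos]
    have hdist : C * |astar - a| ≤ η / 2 := by
      have h1 : |astar - a| = min (η / (2 * C)) (astar / 2) := by
        rw [had]; rw [show astar - (astar - min (η / (2 * C)) (astar / 2))
          = min (η / (2 * C)) (astar / 2) by ring, abs_of_pos hminpos]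
      rw [h1]
      have h2 : min (η / (2 * C)) (astar / 2) ≤ η / (2 * C) := min_le_left _ _
      calc C * min (η / (2 * C)) (astar / 2) ≤ C * (η / (2 * C)) :=
            mul_le_mul_of_nonneg_left h2 hC.le
        _ = η / 2 := by field_simp
    have hd₁ := (hCd (u astar) (u' astar) (u a) (u' a) astar a hRastar hRa
      (hS astar) (hS a) z₁ hz₁Icc).1
    have hd₂ := (hCd (u astar) (u' astar) (u a) (u' a) astar a hRastar hRa
      (hS astar) (hS a) z₂ hz₂Icc).1
    have hb₁ : |u astar z₁ - u a z₁| ≤ η / 2 := le_trans hd₁ hdist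
    have hb₂ : |u astar z₂ - u a z₂| ≤ η / 2 := le_trans hd₂ hdist
    have hη₁ : η ≤ |u astar z₁| := min_le_left _ _
    have hη₂ : η ≤ |u astar z₂| := min_le_right _ _
    rw [abs_le] at hb₁ hb₂
    -- `u a` changes sign between z₁ and z₂
    have hsign : u a z₁ * u a z₂ < 0 := by
      rcases lt_or_gt_of_ne hs₁ne with hneg | hpos
      · have habs₁ : |u astar z₁| = -(u astar z₁) := abs_of_neg hneg
        have hs₂pos : 0 < u astar z₂ := by nlinarith
        have habs₂ : |u astar z₂| = u astar z₂ := abs_of_pos hs₂pos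
        have h1 : u a z₁ < 0 := by rw [habs₁] at hη₁; linarith [hb₁.1, hb₁.2]
        have h2 : 0 < u a z₂ := by rw [habs₂] at hη₂; linarith [hb₂.1, hb₂.2]
        exact mul_neg_of_neg_of_pos h1 h2
      · have habs₁ : |u astar z₁| = u astar z₁ := abs_of_pos hpos
        have hs₂neg : u astar z₂ < 0 := by nlinarith
        have habs₂ : |u astar z₂| = -(u astar z₂) := abs_of_neg hs₂neg
        have h1 : 0 < u a z₁ := by rw [habs₁] at hη₁; linarith [hb₁.1, hb₁.2]
        have h2 : u a z₂ < 0 := by rw [habs₂] at hη₂; linarith [hb₂.1, hb₂.2]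
        exact mul_neg_of_pos_of_neg h1 h2
    -- IVT gives a zero of `u a` strictly between z₁ and z₂
    have hz₁₂ : z₁ ≤ z₂ := by linarith [hz₁.2, hz₂.1]
    have hcont : ContinuousOn (u a) (Icc z₁ z₂) := (hS a).contF.continuousOn
    have hzero : ∃ c ∈ Ioo z₁ z₂, u a c = 0 := by
      rcases lt_or_gt_of_ne (fun h : u a z₁ = 0 => by rw [h] at hsign; simp at hsign)
        with h1 | h1
      · have h2 : 0 < u a z₂ := by nlinarith
        obtain ⟨c, hc, hc0⟩ := intermediate_value_Ioo hz₁₂ hcont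
          (show (0:ℝ) ∈ Ioo (u a z₁) (u a z₂) from ⟨h1, h2⟩)
        exact ⟨c, hc, hc0⟩
      · have h2 : u a z₂ < 0 := by nlinarith
        obtain ⟨c, hc, hc0⟩ := intermediate_value_Ioo' hz₁₂ hcont
          (show (0:ℝ) ∈ Ioo (u a z₂) (u a z₁) from ⟨h2, h1⟩)
        exact ⟨c, hc, hc0⟩
    obtain ⟨c, hc, hc0⟩ := hzero
    have haS : a ∈ S := ⟨ha_pos, c, ⟨lt_trans hz₁T hc.1, by linarith [hc.2, hz₂T]⟩, hc0⟩
    have := csInf_le hbdd haS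
    rw [← hastard] at this
    linarith
  -- `u astar` vanishes at T₂
  have hT₂zero : u astar T₂ = 0 := by
    have hseq : ∀ n : ℕ, ∃ x ∈ S, x < astar + 1 / (n + 1) := by
      intro n
      apply exists_lt_of_csInf_lt ⟨A, hAS⟩
      rw [← hastard]
      have : (0:ℝ) < 1 / ((n:ℝ) + 1) := by positivity
      linarith
    choose an hanS hanlt using hseq
    have hanlb : ∀ n, astar ≤ an n := fun n => csInf_le hbdd (hanS n)
    have hn1 : ∀ n : ℕ, 1 / ((n:ℝ) + 1) ≤ 1 := by
      intro n
      rw [div_le_one (by positivity)]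
      linarith [Nat.cast_nonneg (α := ℝ) n]
    have hanub : ∀ n, an n ≤ astar + 1 := fun n => le_trans (hanlt n).le (by linarith [hn1 n])
    have hRan : ∀ n, |an n| ≤ A + 1 := by
      intro n
      rw [abs_of_pos (lt_of_lt_of_le hastar_pos (hanlb n))]
      linarith [hanub n, hastarA]
    have hant : Filter.Tendsto an Filter.atTop (nhds astar) := by
      have h1 : Filter.Tendsto (fun n : ℕ => astar + 1 / ((n:ℝ) + 1)) Filter.atTop
          (nhds (astar + 0)) :=
        Filter.Tendsto.const_add _ tendsto_one_div_add_atTop_nhds_zero_nat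
      rw [add_zero] at h1
      exact tendsto_of_tendsto_of_tendsto_of_le_of_le tendsto_const_nhds h1
        hanlb fun n => (hanlt n).le
    have hzex : ∀ n, ∃ t ∈ Ioc T₁ T₂, u (an n) t = 0 := fun n => (hanS n).2
    choose zn hznI hzn0 using hzex
    obtain ⟨z, hzIcc, φ, hφ, hφt⟩ := isCompact_Icc.tendsto_subseq
      (x := zn) fun n => Ioc_subset_Icc_self (hznI n)
    have hanφ : Filter.Tendsto (fun k => an (φ k)) Filter.atTop (nhds astar) :=
      hant.comp hφ.tendsto_atTop
    have habs0 : Filter.Tendsto (fun k => C * |astar - an (φ k)|) Filter.atTop (nhds 0) := by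
      have h1 : Filter.Tendsto (fun k => |astar - an (φ k)|) Filter.atTop (nhds |astar - astar|) :=
        ((continuous_const.sub continuous_id).abs.tendsto astar).comp hanφ
      rw [sub_self, abs_zero] at h1
      have := h1.const_mul C
      rwa [mul_zero] at this
    -- limit of the zeros is a zero of `u astar`
    have hu0 : u astar z = 0 := by
      have h1 : Filter.Tendsto (fun k => u astar (zn (φ k))) Filter.atTop (nhds (u astar z)) :=
        ((hS astar).contF.tendsto z).comp hφt
      have h2 : Filter.Tendsto (fun k => u astar (zn (φ k))) Filter.atTop (nhds 0) := by
        apply squeeze_zero_norm _ habs0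
        intro k
        have hd := (hCd (u astar) (u' astar) (u (an (φ k))) (u' (an (φ k))) astar (an (φ k))
          hRastar (hRan (φ k)) (hS astar) (hS (an (φ k))) (zn (φ k))
          (Ioc_subset_Icc_self (hznI (φ k)))).1
        rw [Real.norm_eq_abs]
        rw [hzn0 (φ k)] at hd
        rwa [sub_zero] at hd
      exact tendsto_nhds_unique h1 h2
    -- the limit is not T₁ (Rolle + convergence of momenta)
    have hzT₁ : T₁ < z := by
      rcases eq_or_lt_of_le hzIcc.1 with heq | h
      · exfalso
        have hrolle : ∀ k : ℕ, ∃ c ∈ Ioo T₁ (zn (φ k)), u' (an (φ k)) c = 0 := by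
          intro k
          apply exists_hasDerivAt_eq_zero (hznI (φ k)).1 (hS (an (φ k))).contF.continuousOn
          · rw [(hS (an (φ k))).init, hzn0 (φ k)]
          · exact fun x _ => (hS (an (φ k))).deriv x
        choose ck hck hck0 using hrolle
        have hckt : Filter.Tendsto ck Filter.atTop (nhds T₁) := by
          have h1 : Filter.Tendsto (fun k => zn (φ k)) Filter.atTop (nhds T₁) := by
            rw [← heq] at hφt; exact hφt
          exact tendsto_of_tendsto_of_tendsto_of_le_of_le tendsto_const_nhds h1
            (fun k => (hck k).1.le) fun k => (hck k).2.le
        have h1 : Filter.Tendsto (fun k => p (ck k) * u' astar (ck k)) Filter.atTop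
            (nhds (p T₁ * u' astar T₁)) := ((hS astar).contW.tendsto T₁).comp hckt
        rw [(hS astar).wT₁ hppos] at h1
        have h2 : Filter.Tendsto (fun k => p (ck k) * u' astar (ck k)) Filter.atTop (nhds 0) := by
          apply squeeze_zero_norm _ habs0
          intro k
          have hckIcc : ck k ∈ Icc T₁ T₂ :=
            ⟨(hck k).1.le, le_trans (hck k).2.le (hznI (φ k)).2⟩
          have hd := (hCd (u astar) (u' astar) (u (an (φ k))) (u' (an (φ k))) astar (an (φ k))
            hRastar (hRan (φ k)) (hS astar) (hS (an (φ k))) (ck k) hckIcc).2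
          rw [Real.norm_eq_abs]
          rw [hck0 k, mul_zero, sub_zero] at hd
          exact hd
        have := tendsto_nhds_unique h1 h2
        exact one_ne_zero this
      · exact h
    rcases eq_or_lt_of_le hzIcc.2 with heq | h
    · rwa [← heq]
    · exact absurd hu0 (hnozero z ⟨hzT₁, h⟩)
  -- assemble the statement
  have hZbdd : BddBelow {t | T₁ < t ∧ u astar t = 0} := ⟨T₁, fun x hx => hx.1.le⟩
  refine ⟨astar, ⟨hastar_pos, ⟨T₂, hT, hT₂zero⟩, ?_⟩, ?_, hT₂zero, hnozero⟩
  · apply le_antisymm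
    · exact csInf_le hZbdd ⟨hT, hT₂zero⟩
    · refine le_csInf ⟨T₂, ⟨hT, hT₂zero⟩⟩ ?_
      intro t ht
      by_contra hcon
      push_neg at hcon
      exact hnozero t ⟨ht.1, hcon⟩ ht.2
  · intro a' ha' hne hinf
    have hZbdd' : BddBelow {t | T₁ < t ∧ u a' t = 0} := ⟨T₁, fun x hx => hx.1.le⟩
    have hZlb : ∀ t, T₁ < t → u a' t = 0 → T₂ ≤ t := by
      intro t h1 h2
      by_contra hcon
      push_neg at hcon
      have := csInf_le hZbdd' (show t ∈ {t | T₁ < t ∧ u a' t = 0} from ⟨h1, h2⟩)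
      rw [hinf] at this
      linarith
    have hno' : ∀ t ∈ Ioo T₁ T₂, u a' t ≠ 0 := fun t ht h0 =>
      absurd (hZlb t ht.1 h0) (not_le.2 ht.2)
    have hT₂' : u a' T₂ = 0 := by
      set Z'' : Set ℝ := {t ∈ Icc T₂ (T₂ + 1) | u a' t = 0} with hZ''d
      have hZ''c : IsClosed Z'' :=
        isClosed_Icc.inter (isClosed_singleton.preimage (hS a').contF)
      have hZ''ne : Z''.Nonempty := by
        obtain ⟨t, htZ, htlt⟩ := exists_lt_of_csInf_lt (b := T₂ + 1) hne (by rw [hinf]; linarith)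
        exact ⟨t, ⟨⟨hZlb t htZ.1 htZ.2, htlt.le⟩, htZ.2⟩⟩
      have hZ''bdd : BddBelow Z'' := ⟨T₂, fun x hx => hx.1.1⟩
      have hZ''inf : sInf Z'' = T₂ := by
        apply le_antisymm
        · rw [Real.sInf_le_iff hZ''bdd hZ''ne]
          intro ε hε
          obtain ⟨t, htZ, htlt⟩ := exists_lt_of_csInf_lt (b := T₂ + min ε 1) hne
            (by rw [hinf]; exact lt_add_of_pos_right _ (lt_min hε one_pos))
          refine ⟨t, ⟨⟨hZlb t htZ.1 htZ.2, ?_⟩, htZ.2⟩, ?_⟩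
          · have := min_le_right ε 1; linarith
          · have := min_le_left ε 1; linarith
        · exact le_csInf hZ''ne fun x hx => hx.1.1
      have := hZ''c.csInf_mem hZ''ne hZ''bdd
      rw [hZ''inf] at this
      exact this.2
    rcases lt_trichotomy a' astar with h | h | h
    · exact absurd (picone hp hq hm hppos hqnn hT (hS a') (hS astar) h ha'
        hT₂' hT₂zero hnozero) not_false
    · exact h
    · exact absurd (picone hp hq hm hppos hqnn hT (hS astar) (hS a') h hastar_pos
        hT₂zero hT₂' hno') not_false
end LargeA
end

section
/- Suppose m⁺ ≢ 0 and n⁺ ≢ 0 on (T₁, T₂). Then C₂^{>++} or C₂^{<++} is nonempty. More precisely, setting α := inf{ t > T₁ : m(t) > 0 } and β := inf{ t > T₁ : n(t) > 0 }, if α ≤ β then C₂^{>++} ≠ ∅, and if β < α then C₂^{<++} ≠ ∅. -/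
open Set Filter Classical

noncomputable section

/-- `u c s` is the solution of `-(p·u')' + q·u = c·w·u` with `u c s s = 0` and
`(u c s)' s = 1/(p s)`; `u'` is its `t`-derivative. -/
def IsSolFamily (p q w : ℝ → ℝ) (u u' : ℝ → ℝ → ℝ → ℝ) : Prop :=
  ∀ c s : ℝ, u c s s = 0 ∧ u' c s s = 1 / p s ∧
    ∀ t : ℝ, HasDerivAt (u c s) (u' c s t) t ∧
      HasDerivAt (fun τ => p τ * u' c s τ) (q t * u c s t - c * w t * u c s t) t

/-- Zero set of `u c s` strictly after `s`. -/
def zeroSet (u : ℝ → ℝ → ℝ → ℝ) (c s : ℝ) : Set ℝ := {t | s < t ∧ u c s t = 0}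

/-- The zero-function `φ_c(s)`, valued in `EReal` (equal to `⊤` when `u c s`
never vanishes after `s`). -/
noncomputable def phiE (u : ℝ → ℝ → ℝ → ℝ) (c s : ℝ) : EReal :=
  if (zeroSet u c s).Nonempty then ((sInf (zeroSet u c s) : ℝ) : EReal) else ⊤

/-- The zero-function as a map `EReal → EReal` (`⊤` propagates). -/
noncomputable def phiStep (u : ℝ → ℝ → ℝ → ℝ) (c : ℝ) (x : EReal) : EReal :=
  if x = ⊤ ∨ x = ⊥ then ⊤ else phiE u c x.toReal

/-- `Φ_k^>(a,b)`: composition of `k` alternating zero-functions `φ_a^m, φ_b^n`,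
starting with `φ_a^m`. -/
noncomputable def PhiGt (uM uN : ℝ → ℝ → ℝ → ℝ) (a b : ℝ) : ℕ → EReal → EReal
  | 0 => id
  | k + 1 => (if k % 2 = 0 then phiStep uM a else phiStep uN b) ∘ PhiGt uM uN a b k

/-- `Φ_k^<(a,b)`: composition of `k` alternating zero-functions, starting with
`φ_b^n`. -/
noncomputable def PhiLt (uM uN : ℝ → ℝ → ℝ → ℝ) (a b : ℝ) : ℕ → EReal → EReal
  | 0 => id
  | k + 1 => (if k % 2 = 0 then phiStep uN b else phiStep uM a) ∘ PhiLt uM uN a b k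

/-- `C_k^{>++} = {(a,b) ∈ ℝ⁺×ℝ⁺ : Φ_k^>(a,b)(T₁) = T₂}`. -/
def CGt (uM uN : ℝ → ℝ → ℝ → ℝ) (T₁ T₂ : ℝ) (k : ℕ) : Set (ℝ × ℝ) :=
  {ab | 0 < ab.1 ∧ 0 < ab.2 ∧ PhiGt uM uN ab.1 ab.2 k (T₁ : EReal) = (T₂ : EReal)}

/-- `C_k^{<++} = {(a,b) ∈ ℝ⁺×ℝ⁺ : Φ_k^<(a,b)(T₁) = T₂}`. -/
def CLt (uM uN : ℝ → ℝ → ℝ → ℝ) (T₁ T₂ : ℝ) (k : ℕ) : Set (ℝ × ℝ) :=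
  {ab | 0 < ab.1 ∧ 0 < ab.2 ∧ PhiLt uM uN ab.1 ab.2 k (T₁ : EReal) = (T₂ : EReal)}


open Real

/-- Single solution data: `f` solves `(p f')' = (q - W) f`, `f s = 0`, `g = f'`, `g s = 1/p s`. -/
structure SolAt (p q W : ℝ → ℝ) (s : ℝ) (f g : ℝ → ℝ) : Prop where
  init : f s = 0
  init' : g s = 1 / p s
  hd : ∀ t, HasDerivAt f (g t) t
  hd2 : ∀ t, HasDerivAt (fun τ => p τ * g τ) (q t * f t - W t * f t) t

namespace SolAt

variable {p q W : ℝ → ℝ} {s : ℝ} {f g : ℝ → ℝ}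
variable (hp : Continuous p) (hpp : ∀ t, 0 < p t)

theorem contf (S : SolAt p q W s f g) : Continuous f :=
  continuous_iff_continuousAt.2 fun t => (S.hd t).continuousAt

theorem contpg (S : SolAt p q W s f g) : Continuous (fun t => p t * g t) :=
  continuous_iff_continuousAt.2 fun t => (S.hd2 t).continuousAt

include hp hpp in
theorem contg (S : SolAt p q W s f g) : Continuous g := by
  have : g = fun t => (p t * g t) / p t := by
    funext t; field_simp [(hpp t).ne']
  rw [this]
  exact S.contpg.div hp fun t => (hpp t).ne'

/-- The vector `(f, p g)`. -/
def X (p f g : ℝ → ℝ) (t : ℝ) : ℝ × ℝ := (f t, p t * g t)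

theorem hdX (S : SolAt p q W s f g) (t : ℝ) :
    HasDerivAt (X p f g) (g t, q t * f t - W t * f t) t :=
  (S.hd t).prodMk (S.hd2 t)

theorem normX_bound {K : ℝ} (t : ℝ) (h1 : 1 / p t ≤ K) (h2 : |q t - W t| ≤ K)
    (hpt : 0 < p t) :
    ‖(g t, q t * f t - W t * f t)‖ ≤ K * ‖X p f g t‖ := by
  have hK : 0 ≤ K := le_trans (le_of_lt (by positivity)) h1
  rw [Prod.norm_def, Prod.norm_def]
  have e1 : ‖g t‖ ≤ K * ‖X p f g t‖ := by
    have : g t = (p t * g t) * (1 / p t) := by field_simp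
    rw [this]
    calc ‖p t * g t * (1 / p t)‖ = ‖p t * g t‖ * (1 / p t) := by
          rw [norm_mul]; congr 1; rw [Real.norm_eq_abs, abs_of_pos (by positivity)]
      _ ≤ ‖X p f g t‖ * K := by
          apply mul_le_mul ?_ h1 (by positivity) (norm_nonneg _)
          rw [Prod.norm_def]; exact le_max_right _ _
      _ = K * ‖X p f g t‖ := mul_comm _ _
  have e2 : ‖q t * f t - W t * f t‖ ≤ K * ‖X p f g t‖ := by
    have : q t * f t - W t * f t = (q t - W t) * f t := by ring
    rw [this, norm_mul]
    calc ‖q t - W t‖ * ‖f t‖ ≤ K * ‖f t‖ := by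
          apply mul_le_mul_of_nonneg_right _ (norm_nonneg _)
          rwa [Real.norm_eq_abs]
      _ ≤ K * ‖X p f g t‖ := by
          apply mul_le_mul_of_nonneg_left _ hK
          rw [Prod.norm_def]; exact le_max_left _ _
  exact max_le (le_trans e1 (le_refl _)) e2

include hpp in
/-- Self bound: `‖X t‖ ≤ e^{K (t - s)}` on `[s, T]`. -/
theorem selfBound (S : SolAt p q W s f g) {T K : ℝ}
    (hK : ∀ t ∈ Icc s T, 1 / p t ≤ K ∧ |q t - W t| ≤ K) :
    ∀ t ∈ Icc s T, ‖X p f g t‖ ≤ Real.exp (K * (t - s)) := by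
  intro t ht
  have hXs : ‖X p f g s‖ ≤ 1 := by
    rw [X, S.init, S.init']
    have : p s * (1 / p s) = 1 := by field_simp [(hpp s).ne']
    rw [this, Prod.norm_def]
    simp [norm_one]
  have := norm_le_gronwallBound_of_norm_deriv_right_le
    (f := X p f g) (f' := fun t => (g t, q t * f t - W t * f t)) (δ := 1) (K := K) (ε := 0)
    (a := s) (b := T)
    (Continuous.continuousOn (by exact (S.contf.prodMk S.contpg)))
    (fun x _ => (S.hdX x).hasDerivWithinAt) hXs
    (fun x hx => by
      rw [add_zero]
      exact normX_bound x (hK x (Ico_subset_Icc_self hx)).1 (hK x (Ico_subset_Icc_self hx)).2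
        (hpp x))
    t ht
  rwa [gronwallBound_ε0, one_mul] at this

include hpp in
/-- Difference bound between two solutions with different potentials. -/
theorem diffBound (S1 : SolAt p q W s f g) {W2 f2 g2 : ℝ → ℝ} (S2 : SolAt p q W2 s f2 g2)
    {T K ε : ℝ} (hε : 0 ≤ ε)
    (hK : ∀ t ∈ Icc s T, 1 / p t ≤ K ∧ |q t - W t| ≤ K)
    (hE : ∀ t ∈ Icc s T, |W t - W2 t| * |f2 t| ≤ ε) :
    ∀ t ∈ Icc s T, ‖X p f g t - X p f2 g2 t‖ ≤ gronwallBound 0 K ε (t - s) := by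
  have hD : ∀ t, HasDerivAt (fun τ => X p f g τ - X p f2 g2 τ)
      ((g t - g2 t, (q t * f t - W t * f t) - (q t * f2 t - W2 t * f2 t))) t :=
    fun t => (S1.hdX t).sub (S2.hdX t)
  intro t ht
  have h0 : ‖X p f g s - X p f2 g2 s‖ ≤ 0 := by
    rw [X, X, S1.init, S2.init, S1.init', S2.init']; simp
  refine norm_le_gronwallBound_of_norm_deriv_right_le
    (f := fun τ => X p f g τ - X p f2 g2 τ)
    (f' := fun t => (g t - g2 t, (q t * f t - W t * f t) - (q t * f2 t - W2 t * f2 t)))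
    (Continuous.continuousOn (by exact ((S1.contf.prodMk S1.contpg).sub
      (S2.contf.prodMk S2.contpg)))) (fun x _ => (hD x).hasDerivWithinAt) h0 ?_ t ht
  intro x hx
  have hx' := Ico_subset_Icc_self hx
  obtain ⟨hK1, hK2⟩ := hK x hx'
  have hpx := hpp x
  rw [Prod.norm_def]
  have e1 : ‖g x - g2 x‖ ≤ K * ‖X p f g x - X p f2 g2 x‖ + ε := by
    have : g x - g2 x = (p x * g x - p x * g2 x) * (1 / p x) := by field_simp
    rw [this, norm_mul]
    have h1 : ‖(1 : ℝ) / p x‖ = 1 / p x := by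
      rw [Real.norm_eq_abs, abs_of_pos (by positivity)]
    rw [h1]
    calc ‖p x * g x - p x * g2 x‖ * (1 / p x)
        ≤ ‖X p f g x - X p f2 g2 x‖ * K := by
          apply mul_le_mul _ hK1 (by positivity) (norm_nonneg _)
          rw [Prod.norm_def]
          refine le_trans ?_ (le_max_right _ _)
          rfl
      _ ≤ K * ‖X p f g x - X p f2 g2 x‖ + ε := by
          rw [mul_comm]; linarith
  have e2 : ‖(q x * f x - W x * f x) - (q x * f2 x - W2 x * f2 x)‖
      ≤ K * ‖X p f g x - X p f2 g2 x‖ + ε := by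
    have : (q x * f x - W x * f x) - (q x * f2 x - W2 x * f2 x)
        = (q x - W x) * (f x - f2 x) + (W2 x - W x) * f2 x := by ring
    rw [this]
    refine le_trans (norm_add_le _ _) (add_le_add ?_ ?_)
    · rw [norm_mul]
      calc ‖q x - W x‖ * ‖f x - f2 x‖ ≤ K * ‖f x - f2 x‖ :=
            mul_le_mul_of_nonneg_right (by rwa [Real.norm_eq_abs]) (norm_nonneg _)
        _ ≤ K * ‖X p f g x - X p f2 g2 x‖ := by
            apply mul_le_mul_of_nonneg_left _ ?_
            · rw [Prod.norm_def]; exact le_trans (le_max_left _ _) (le_refl _)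
            · have : (0:ℝ) < 1 / p x := by positivity
              linarith [hK1]
    · rw [norm_mul, Real.norm_eq_abs, Real.norm_eq_abs, abs_sub_comm]
      exact hE x hx'
  exact max_le e1 e2


lemma pos_nbhd_Icc' {g : ℝ → ℝ} {τ : ℝ} (hg : ContinuousAt g τ) (h : 0 < g τ) :
    ∃ δ > 0, ∀ t ∈ Icc (τ - δ) (τ + δ), 0 < g t := by
  obtain ⟨δ, hδ, hb⟩ := Metric.continuousAt_iff.1 hg (g τ) h
  refine ⟨δ / 2, by positivity, fun t ht => ?_⟩
  have hd : dist t τ < δ := by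
    rw [Real.dist_eq, abs_sub_lt_iff]
    constructor <;> [linarith [ht.2]; linarith [ht.1]]
  have := hb hd
  rw [Real.dist_eq, abs_sub_lt_iff] at this
  linarith [this.1]

include hp hpp in
/-- Backward uniqueness: if `X` vanishes at `τ` then `f` vanishes on `[r, τ]`. -/
theorem backward_zero (hq : Continuous q) (hW : Continuous W)
    (S : SolAt p q W s f g) {τ r : ℝ} (hr : r ≤ τ) (h0 : f τ = 0) (h0' : g τ = 0) :
    ∀ t ∈ Icc r τ, f t = 0 := by
  -- bound the coefficients on [r, τ]
  obtain ⟨K, hKb⟩ := (isCompact_Icc (a := r) (b := τ)).exists_bound_of_continuousOn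
    (f := fun t => ((1 / p t : ℝ), q t - W t))
    (Continuous.continuousOn (by
      exact ((continuous_const.div hp fun t => (hpp t).ne').prodMk (hq.sub hW))))
  have hK : ∀ t ∈ Icc r τ, 1 / p t ≤ K ∧ |q t - W t| ≤ K := by
    intro t ht
    have := hKb t ht
    rw [Prod.norm_def] at this
    constructor
    · exact le_trans (le_abs_self _) (le_trans (le_max_left _ _) this)
    · exact le_trans (le_max_right _ _) this
  -- reversed trajectory
  set Y : ℝ → ℝ × ℝ := fun t => X p f g (r + τ - t) with hYdef
  have hYd : ∀ t, HasDerivAt Y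
      ((-1 : ℝ) • (g (r + τ - t), q (r+τ-t) * f (r+τ-t) - W (r+τ-t) * f (r+τ-t))) t := by
    intro t
    have hi : HasDerivAt (fun t : ℝ => r + τ - t) (-1) t := by
      simpa using (hasDerivAt_id t).const_sub (r + τ)
    exact HasDerivAt.scomp t (S.hdX (r + τ - t)) hi
  have hIcc : ∀ t ∈ Icc r τ, r + τ - t ∈ Icc r τ := by
    intro t ht; constructor <;> [linarith [ht.2]; linarith [ht.1]]
  have hY0 : ‖Y r‖ ≤ 0 := by
    have : r + τ - r = τ := by ring
    rw [hYdef]; simp only [this]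
    rw [X, h0, h0', Prod.norm_def]
    simp
  have key := norm_le_gronwallBound_of_norm_deriv_right_le (a := r) (b := τ)
    (f := Y) (f' := fun t => (-1 : ℝ) • (g (r + τ - t),
      q (r+τ-t) * f (r+τ-t) - W (r+τ-t) * f (r+τ-t))) (δ := 0) (K := K) (ε := 0)
    (Continuous.continuousOn (by
      exact (S.contf.prodMk S.contpg).comp
        ((continuous_const).sub continuous_id)))
    (fun x _ => (hYd x).hasDerivWithinAt) hY0 ?_
  · intro t ht
    have h1 := key (r + τ - t) (hIcc t ht)
    rw [gronwallBound_ε0_δ0] at h1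
    have : ‖X p f g t‖ ≤ 0 := by
      rw [hYdef] at h1
      simp only [show r + τ - (r + τ - t) = t by ring] at h1
      exact h1
    have hX0 : X p f g t = 0 := by
      have := norm_le_zero_iff.1 this
      exact this
    have := congrArg Prod.fst hX0
    simpa [X] using this
  · intro x hx
    rw [norm_smul, add_zero]
    have := normX_bound (f := f) (g := g) (q := q) (W := W) (r + τ - x)
      (hK _ (hIcc x (Ico_subset_Icc_self hx))).1 (hK _ (hIcc x (Ico_subset_Icc_self hx))).2
      (hpp _)
    simpa [hYdef] using this


include hp hpp in
theorem localPos (S : SolAt p q W s f g) :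
    ∃ δ > 0, (∀ t ∈ Ioc s (s + δ), 0 < f t) ∧ ∀ t ∈ Icc (s - δ) (s + δ), 0 < g t := by
  have hgs : 0 < g s := by rw [S.init']; exact one_div_pos.2 (hpp s)
  obtain ⟨δ, hδ, hgp⟩ := pos_nbhd_Icc' (S.contg hp hpp).continuousAt hgs
  have hmono : StrictMonoOn f (Icc s (s + δ)) := by
    apply strictMonoOn_of_deriv_pos (convex_Icc _ _) S.contf.continuousOn
    intro x hx
    rw [interior_Icc] at hx
    rw [(S.hd x).deriv]
    exact hgp x ⟨by linarith [hx.1], le_of_lt hx.2⟩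
  refine ⟨δ, hδ, fun t ht => ?_, fun t ht => hgp t ht⟩
  have := hmono (left_mem_Icc.2 (by linarith)) ⟨le_of_lt ht.1, ht.2⟩ ht.1
  rwa [S.init] at this

include hp hpp in
theorem posUntil (S : SolAt p q W s f g) {T : ℝ}
    (hnz : ∀ t ∈ Ioc s T, f t ≠ 0) : ∀ t ∈ Ioc s T, 0 < f t := by
  intro t ht
  by_contra hle
  push_neg at hle
  have hflt : f t < 0 := lt_of_le_of_ne hle (hnz t ht)
  obtain ⟨δ, hδ, hfp, -⟩ := S.localPos hp hpp
  set t₁ := min (s + δ) ((s + t) / 2) with ht₁def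
  have hst : s < t := ht.1
  have ht₁s : s < t₁ := lt_min (by linarith) (by linarith)
  have ht₁t : t₁ < t := lt_of_le_of_lt (min_le_right _ _) (by linarith)
  have hft₁ : 0 < f t₁ := hfp t₁ ⟨ht₁s, min_le_left _ _⟩
  have hz : (0:ℝ) ∈ Ioo (f t) (f t₁) := ⟨hflt, hft₁⟩
  obtain ⟨z, hz1, hz2⟩ := intermediate_value_Ioo' (le_of_lt ht₁t)
    S.contf.continuousOn hz
  exact hnz z ⟨lt_trans ht₁s hz1.1, le_trans (le_of_lt hz1.2) ht.2⟩ hz2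

include hp hpp in
theorem firstZero (S : SolAt p q W s f g)
    (hne : {t | s < t ∧ f t = 0}.Nonempty) :
    s < sInf {t | s < t ∧ f t = 0} ∧ f (sInf {t | s < t ∧ f t = 0}) = 0 ∧
      (∀ t ∈ Ioo s (sInf {t | s < t ∧ f t = 0}), 0 < f t) ∧
      ∀ t' ∈ {t | s < t ∧ f t = 0}, sInf {t | s < t ∧ f t = 0} ≤ t' := by
  obtain ⟨δ, hδ, hfp, -⟩ := S.localPos hp hpp
  set Z := {t | s < t ∧ f t = 0} with hZ
  have hZsub : ∀ z ∈ Z, s + δ < z := by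
    intro z hz
    by_contra hle
    push_neg at hle
    exact absurd hz.2 (ne_of_gt (hfp z ⟨hz.1, hle⟩))
  have hZeq : Z = {t | s + δ ≤ t} ∩ f ⁻¹' {0} := by
    ext t
    constructor
    · intro ht; exact ⟨le_of_lt (hZsub t ht), ht.2⟩
    · intro ht; exact ⟨by have := ht.1; simp only [mem_setOf_eq] at this; linarith, ht.2⟩
  have hclosed : IsClosed Z := by
    rw [hZeq]
    exact (isClosed_le continuous_const continuous_id).inter
      (isClosed_singleton.preimage S.contf)
  have hbdd : BddBelow Z := ⟨s, fun z hz => le_of_lt hz.1⟩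
  have hmem : sInf Z ∈ Z := hclosed.csInf_mem hne hbdd
  refine ⟨hmem.1, hmem.2, ?_, fun t' ht' => csInf_le hbdd ht'⟩
  intro t ht
  refine S.posUntil hp hpp (T := t) ?_ t ⟨ht.1, le_refl t⟩
  intro r hr hfr
  have : sInf Z ≤ r := csInf_le hbdd ⟨hr.1, hfr⟩
  linarith [ht.2, hr.2]

include hp hpp in
theorem simpleZero (hq : Continuous q) (hW : Continuous W)
    (S : SolAt p q W s f g) {τ : ℝ} (hτ : s < τ)
    (hpos : ∀ t ∈ Ioo s τ, 0 < f t) (h0 : f τ = 0) : g τ < 0 := by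
  rcases lt_trichotomy (g τ) 0 with h | h | h
  · exact h
  · -- g τ = 0 : backward uniqueness contradiction
    exfalso
    set t₁ := (s + τ) / 2 with ht₁
    have h1 : f t₁ = 0 := S.backward_zero hp hpp hq hW (by linarith) h0 h
      t₁ ⟨by linarith, by linarith⟩
    exact absurd h1 (ne_of_gt (hpos t₁ ⟨by linarith, by linarith⟩))
  · -- g τ > 0 : f < 0 slightly to the left
    exfalso
    obtain ⟨δ, hδ, hgp⟩ := pos_nbhd_Icc' (S.contg hp hpp).continuousAt h
    set δ' := min δ ((τ - s) / 2) with hδ'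
    have hδ'0 : 0 < δ' := lt_min hδ (by linarith)
    have hmono : StrictMonoOn f (Icc (τ - δ') τ) := by
      apply strictMonoOn_of_deriv_pos (convex_Icc _ _) S.contf.continuousOn
      intro x hx
      rw [interior_Icc] at hx
      rw [(S.hd x).deriv]
      refine hgp x ⟨?_, by linarith [hx.2]⟩
      have : δ' ≤ δ := min_le_left _ _
      linarith [hx.1]
    have h2 : f (τ - δ') < f τ :=
      hmono (left_mem_Icc.2 (by linarith)) (right_mem_Icc.2 (by linarith)) (by linarith)
    have h3 : 0 < f (τ - δ') := by
      refine hpos _ ⟨?_, by linarith⟩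
      have : δ' ≤ (τ - s)/2 := min_le_right _ _
      linarith
    rw [h0] at h2
    linarith


include hp hpp in
/-- If the potential `q - W` is nonnegative on `(s,T)`, then `f > 0` on `(s,T]`. -/
theorem posOfPotential (hq : Continuous q) (hW : Continuous W)
    (S : SolAt p q W s f g) {T : ℝ}
    (hqW : ∀ t ∈ Ioo s T, 0 ≤ q t - W t) : ∀ t ∈ Ioc s T, 0 < f t := by
  intro t ht
  by_contra hle
  push_neg at hle
  -- there is a zero in Ioc s t
  have hZne : {r | s < r ∧ f r = 0}.Nonempty ∧ sInf {r | s < r ∧ f r = 0} ≤ t := by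
    rcases eq_or_lt_of_le hle with heq | hlt
    · exact ⟨⟨t, ht.1, heq⟩, csInf_le ⟨s, fun z hz => le_of_lt hz.1⟩ ⟨ht.1, heq⟩⟩
    · obtain ⟨δ, hδ, hfp, -⟩ := S.localPos hp hpp
      set t₁ := min (s + δ) ((s + t) / 2) with ht₁def
      have hst : s < t := ht.1
      have ht₁s : s < t₁ := lt_min (by linarith) (by linarith)
      have ht₁t : t₁ < t := lt_of_le_of_lt (min_le_right _ _) (by linarith)
      have hft₁ : 0 < f t₁ := hfp t₁ ⟨ht₁s, min_le_left _ _⟩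
      obtain ⟨z, hz1, hz2⟩ := intermediate_value_Ioo' (le_of_lt ht₁t)
        S.contf.continuousOn (⟨hlt, hft₁⟩ : (0:ℝ) ∈ Ioo (f t) (f t₁))
      refine ⟨⟨z, lt_trans ht₁s hz1.1, hz2⟩, le_trans
        (csInf_le ⟨s, fun r hr => le_of_lt hr.1⟩ ⟨lt_trans ht₁s hz1.1, hz2⟩)
        (le_of_lt hz1.2)⟩
  obtain ⟨hZne, hτt⟩ := hZne
  obtain ⟨hτs, hfτ, hposτ, -⟩ := S.firstZero hp hpp hZne
  set τ := sInf {r | s < r ∧ f r = 0} with hτdef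
  -- p·g is monotone on [s,τ]
  have hmono : MonotoneOn (fun r => p r * g r) (Icc s τ) := by
    apply monotoneOn_of_deriv_nonneg (convex_Icc _ _) S.contpg.continuousOn
    · intro x hx
      exact ((S.hd2 x).differentiableAt).differentiableWithinAt
    · intro x hx
      rw [interior_Icc] at hx
      rw [(S.hd2 x).deriv]
      have hfx : 0 < f x := hposτ x hx
      have hqWx : 0 ≤ q x - W x := hqW x ⟨hx.1, lt_of_lt_of_le hx.2 (le_trans hτt ht.2)⟩
      nlinarith
  have h1 : p s * g s ≤ p τ * g τ :=
    hmono (left_mem_Icc.2 (le_of_lt hτs)) (right_mem_Icc.2 (le_of_lt hτs)) (le_of_lt hτs)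
  have h2 : p s * g s = 1 := by rw [S.init']; field_simp [(hpp s).ne']
  have h3 : g τ < 0 := S.simpleZero hp hpp hq hW hτs hposτ hfτ
  nlinarith [hpp τ]

include hp hpp in
/-- Continuous dependence on the potential. -/
theorem dep (hq : Continuous q) (hW : Continuous W) (S1 : SolAt p q W s f g)
    {T ε : ℝ} (hsT : s ≤ T) (hε : 0 < ε) :
    ∃ η > 0, ∀ W2 f2 g2, SolAt p q W2 s f2 g2 → (∀ t ∈ Icc s T, |W t - W2 t| ≤ η) →
      ∀ t ∈ Icc s T, |f t - f2 t| ≤ ε ∧ |p t * g t - p t * g2 t| ≤ ε := by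
  obtain ⟨K₁, hK₁⟩ := (isCompact_Icc (a := s) (b := T)).exists_bound_of_continuousOn
    (f := fun t => ((1 / p t : ℝ), q t - W t))
    (Continuous.continuousOn
      ((continuous_const.div hp fun t => (hpp t).ne').prodMk (hq.sub hW)))
  set K := K₁ + 1 with hKdef
  have hK : ∀ t ∈ Icc s T, 1 / p t ≤ K ∧ |q t - W t| ≤ K₁ := by
    intro t ht
    have h0 := hK₁ t ht
    rw [Prod.norm_def] at h0
    have h2 : ‖(1 / p t : ℝ)‖ ≤ K₁ := le_trans (le_max_left _ _) h0
    have h3 : ‖q t - W t‖ ≤ K₁ := le_trans (le_max_right _ _) h0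
    rw [Real.norm_eq_abs] at h2 h3
    exact ⟨le_trans (le_abs_self _) (by linarith), h3⟩
  have hKpos : 0 < K := by
    have h1 := (hK s (left_mem_Icc.2 hsT)).2
    have h2 := abs_nonneg (q s - W s)
    linarith
  set R := Real.exp (K * (T - s)) with hRdef
  have hRpos : 0 < R := Real.exp_pos _
  set η := min 1 (ε * K / (R * R)) with hηdef
  have hηpos : 0 < η := lt_min one_pos (by positivity)
  refine ⟨η, hηpos, fun W2 f2 g2 S2 hW2 t ht => ?_⟩
  have hKcover : ∀ r ∈ Icc s T, 1 / p r ≤ K ∧ |q r - W2 r| ≤ K := by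
    intro r hr
    refine ⟨(hK r hr).1, ?_⟩
    have h1 := (hK r hr).2
    have h2 := hW2 r hr
    have h3 : |q r - W2 r| ≤ |q r - W r| + |W r - W2 r| := by
      calc |q r - W2 r| = |(q r - W r) + (W r - W2 r)| := by ring_nf
        _ ≤ _ := abs_add_le _ _
    have hη1 : η ≤ 1 := min_le_left _ _
    linarith
  -- self bound for f2
  have hSelf := S2.selfBound hpp (T := T) (K := K) hKcover
  have hf2bound : ∀ r ∈ Icc s T, |f2 r| ≤ R := by
    intro r hr
    have h1 := hSelf r hr
    rw [X, Prod.norm_def] at h1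
    have h2 : |f2 r| ≤ Real.exp (K * (r - s)) := by
      rw [← Real.norm_eq_abs]
      exact le_trans (le_max_left _ _) h1
    refine le_trans h2 ?_
    rw [hRdef]
    exact Real.exp_le_exp.2 (by nlinarith [hr.2])
  have hεW : ∀ r ∈ Icc s T, |W r - W2 r| * |f2 r| ≤ η * R := by
    intro r hr
    exact mul_le_mul (hW2 r hr) (hf2bound r hr) (abs_nonneg _) (le_of_lt hηpos)
  have hDiff := S1.diffBound hpp S2 (T := T) (K := K) (ε := η * R)
    (by positivity) (fun r hr => hK r hr |>.imp id (fun h => le_trans h (by linarith)))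
    hεW t ht
  have hgb : gronwallBound 0 K (η * R) (t - s) ≤ ε := by
    rw [gronwallBound_of_K_ne_0 (ne_of_gt hKpos)]
    have hexp : Real.exp (K * (t - s)) ≤ R := by
      rw [hRdef]; exact Real.exp_le_exp.2 (by nlinarith [ht.2])
    have hexp1 : (1:ℝ) ≤ Real.exp (K * (t - s)) := by
      rw [← Real.exp_zero]
      exact Real.exp_le_exp.2 (by nlinarith [ht.1])
    have hη2 : η ≤ ε * K / (R * R) := min_le_right _ _
    have h1 : η * R / K * (Real.exp (K * (t - s)) - 1) ≤ η * R / K * R := by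
      apply mul_le_mul_of_nonneg_left _ (by positivity)
      linarith
    have h2 : η * R / K * R ≤ ε := by
      rw [div_mul_eq_mul_div, div_le_iff₀ hKpos]
      have hb : η * (R * R) ≤ ε * K := by
        calc η * (R * R) ≤ ε * K / (R * R) * (R * R) :=
              mul_le_mul_of_nonneg_right hη2 (le_of_lt (mul_pos hRpos hRpos))
          _ = ε * K := by field_simp
      nlinarith
    simp only [zero_mul, zero_add]
    linarith
  have hX := le_trans hDiff hgb
  rw [X, X, Prod.norm_def] at hX
  constructor
  · rw [← Real.norm_eq_abs]
    exact le_trans (le_max_left _ _) hX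
  · rw [← Real.norm_eq_abs]
    refine le_trans (le_trans ?_ (le_max_right _ _)) hX
    rfl


include hp hpp in
/-- Sturm-type oscillation: if the potential `W` is large on `[t₁,t₂] ⊆ (s,∞)`,
then `f` has a zero in `(s, t₂]`. -/
theorem oscillation (S : SolAt p q W s f g) {t₁ t₂ : ℝ} (h1 : s < t₁) (h12 : t₁ < t₂)
    (hbig : ∀ t ∈ Icc t₁ t₂,
      q t + (π / (∫ x in t₁..t₂, 1 / p x))^2 / p t ≤ W t) :
    ∃ z ∈ Ioc s t₂, f z = 0 := by
  by_contra hno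
  push_neg at hno
  have hposf : ∀ t ∈ Ioc s t₂, 0 < f t := S.posUntil hp hpp (fun t ht => hno t ht)
  have hip : Continuous fun x => (1 : ℝ) / p x := continuous_const.div hp fun t => (hpp t).ne'
  set τf : ℝ → ℝ := fun u => ∫ x in t₁..u, 1 / p x with hτf
  have hτd : ∀ t, HasDerivAt τf (1 / p t) t := fun t =>
    intervalIntegral.integral_hasDerivAt_right (hip.intervalIntegrable _ _)
      (hip.stronglyMeasurableAtFilter _ _) hip.continuousAt
  have hτcont : Continuous τf := continuous_iff_continuousAt.2 fun t => (hτd t).continuousAt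
  set L : ℝ := τf t₂ with hL
  have hLpos : 0 < L := intervalIntegral.intervalIntegral_pos_of_pos (hip.intervalIntegrable _ _)
    (fun x => one_div_pos.2 (hpp x)) h12
  set ω : ℝ := π / L with hω
  have hωpos : 0 < ω := div_pos Real.pi_pos hLpos
  have hτ1 : τf t₁ = 0 := intervalIntegral.integral_same
  -- τf is monotone
  have hτmono : Monotone τf := by
    apply monotone_of_deriv_nonneg
      (fun t => (hτd t).differentiableAt)
    intro t
    rw [(hτd t).deriv]
    exact le_of_lt (one_div_pos.2 (hpp t))
  -- Wronskian-type function
  set Wr : ℝ → ℝ := fun t => p t * g t * Real.sin (ω * τf t)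
    - f t * (ω * Real.cos (ω * τf t)) with hWr
  have hWd : ∀ t, HasDerivAt Wr
      (f t * Real.sin (ω * τf t) * (q t - W t + ω^2 / p t)) t := by
    intro t
    have hin : HasDerivAt (fun u => ω * τf u) (ω * (1 / p t)) t := (hτd t).const_mul ω
    have hsin : HasDerivAt (fun u => Real.sin (ω * τf u))
        (Real.cos (ω * τf t) * (ω * (1 / p t))) t :=
      hin.sin
    have hcos : HasDerivAt (fun u => Real.cos (ω * τf u))
        (-Real.sin (ω * τf t) * (ω * (1 / p t))) t :=
      hin.cos
    have hterm1 : HasDerivAt (fun u => p u * g u * Real.sin (ω * τf u))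
        ((q t * f t - W t * f t) * Real.sin (ω * τf t)
          + (p t * g t) * (Real.cos (ω * τf t) * (ω * (1 / p t)))) t :=
      (S.hd2 t).mul hsin
    have hterm2 : HasDerivAt (fun u => f u * (ω * Real.cos (ω * τf u)))
        (g t * (ω * Real.cos (ω * τf t))
          + f t * (ω * (-Real.sin (ω * τf t) * (ω * (1 / p t))))) t :=
      (S.hd t).mul (hcos.const_mul ω)
    have := hterm1.sub hterm2
    refine this.congr_deriv ?_
    have hpt := (hpp t).ne'
    have hpinv : p t * (1 / p t) = 1 := by field_simp
    linear_combination (g t * Real.cos (ω * τf t) * ω) * hpinv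
  have hanti : AntitoneOn Wr (Icc t₁ t₂) := by
    apply antitoneOn_of_deriv_nonpos (convex_Icc _ _)
      (Continuous.continuousOn (continuous_iff_continuousAt.2 fun t => (hWd t).continuousAt))
      (fun x _ => ((hWd x).differentiableAt).differentiableWithinAt)
    intro x hx
    rw [interior_Icc] at hx
    rw [(hWd x).deriv]
    have hfx : 0 < f x := hposf x ⟨lt_trans h1 hx.1, le_of_lt hx.2⟩
    have hsinx : 0 ≤ Real.sin (ω * τf x) := by
      apply Real.sin_nonneg_of_nonneg_of_le_pi
      · have : τf t₁ ≤ τf x := hτmono (le_of_lt hx.1)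
        rw [hτ1] at this
        positivity
      · have h2 : τf x ≤ L := hτmono (le_of_lt hx.2)
        rw [hω]
        calc π / L * τf x ≤ π / L * L := by
              apply mul_le_mul_of_nonneg_left h2 (by positivity)
          _ = π := by field_simp
    have hcoef : q x - W x + ω^2 / p x ≤ 0 := by
      have := hbig x ⟨le_of_lt hx.1, le_of_lt hx.2⟩
      rw [hω]
      linarith
    have : 0 ≤ f x * Real.sin (ω * τf x) := by positivity
    exact mul_nonpos_of_nonneg_of_nonpos this hcoef
  have hend := hanti (left_mem_Icc.2 (le_of_lt h12)) (right_mem_Icc.2 (le_of_lt h12))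
    (le_of_lt h12)
  have hE1 : Wr t₁ = -(f t₁ * ω) := by
    rw [hWr]
    simp only [hτ1, mul_zero, Real.sin_zero, Real.cos_zero]
    ring
  have hE2 : Wr t₂ = f t₂ * ω := by
    have h2 : ω * τf t₂ = π := by
      rw [hω, ← hL]
      field_simp
    simp only [hWr, h2, Real.sin_pi, Real.cos_pi]
    ring
  rw [hE1, hE2] at hend
  have hf1 : 0 < f t₁ := hposf t₁ ⟨h1, le_of_lt h12⟩
  have hf2 : 0 < f t₂ := hposf t₂ ⟨lt_trans h1 h12, le_refl _⟩
  nlinarith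

end SolAt

/-! Family-level lemmas. -/

def IsSolFamilyAux (p q w : ℝ → ℝ) (u u' : ℝ → ℝ → ℝ → ℝ) : Prop :=
  ∀ c s : ℝ, u c s s = 0 ∧ u' c s s = 1 / p s ∧
    ∀ t : ℝ, HasDerivAt (u c s) (u' c s t) t ∧
      HasDerivAt (fun τ => p τ * u' c s τ) (q t * u c s t - c * w t * u c s t) t

namespace IsSolFamilyAux

variable {p q w : ℝ → ℝ} {u u' : ℝ → ℝ → ℝ → ℝ}
variable (hp : Continuous p) (hpp : ∀ t, 0 < p t) (hq : Continuous q) (hw : Continuous w)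

theorem solAt (F : IsSolFamilyAux p q w u u') (c s : ℝ) :
    SolAt p q (fun t => c * w t) s (u c s) (u' c s) :=
  ⟨(F c s).1, (F c s).2.1, fun t => ((F c s).2.2 t).1, fun t => ((F c s).2.2 t).2⟩

include hp hpp hq hw in
theorem famDep (F : IsSolFamilyAux p q w u u') (c s : ℝ) {T ε : ℝ}
    (hsT : s ≤ T) (hε : 0 < ε) :
    ∃ η > 0, ∀ c', |c - c'| ≤ η → ∀ t ∈ Icc s T,
      |u c s t - u c' s t| ≤ ε ∧ |p t * u' c s t - p t * u' c' s t| ≤ ε := by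
  have hWc : Continuous fun t => c * w t := continuous_const.mul hw
  obtain ⟨η₀, hη₀, hdep⟩ := (F.solAt c s).dep hp hpp hq hWc hsT hε
  obtain ⟨Kw, hKw⟩ := (isCompact_Icc (a := s) (b := T)).exists_bound_of_continuousOn
    hw.continuousOn
  have hKw0 : 0 ≤ Kw := le_trans (norm_nonneg _) (hKw s (left_mem_Icc.2 hsT))
  refine ⟨η₀ / (Kw + 1), by positivity, fun c' hc' t ht => ?_⟩
  refine hdep (fun t => c' * w t) (u c' s) (u' c' s) (F.solAt c' s) ?_ t ht
  intro r hr
  have h1 : |c * w r - c' * w r| = |c - c'| * |w r| := by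
    rw [← abs_mul]; ring_nf
  rw [h1]
  calc |c - c'| * |w r| ≤ (η₀ / (Kw + 1)) * (Kw + 1) := by
        apply mul_le_mul hc' _ (abs_nonneg _) (by positivity)
        have := hKw r hr
        rw [Real.norm_eq_abs] at this
        linarith
    _ = η₀ := by field_simp

include hp hpp hq hw in
/-- Openness of positivity on `(s,T]` in the parameter. -/
theorem openPos (F : IsSolFamilyAux p q w u u') {c s T : ℝ} (hsT : s < T)
    (hpos : ∀ t ∈ Ioc s T, 0 < u c s t) :
    ∃ η > 0, ∀ c', |c - c'| ≤ η → ∀ t ∈ Ioc s T, 0 < u c' s t := by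
  set S := F.solAt c s with hS
  have hpgs : 0 < p s * u' c s s := by
    rw [S.init']
    have := hpp s
    field_simp; norm_num
  obtain ⟨δ₁, hδ₁, hpg⟩ := SolAt.pos_nbhd_Icc' (S.contpg.continuousAt) hpgs
  set δ₂ := min δ₁ (T - s) with hδ₂def
  have hδ₂ : 0 < δ₂ := lt_min hδ₁ (by linarith)
  have hsub : Icc s (s + δ₂) ⊆ Icc (s - δ₁) (s + δ₁) := by
    intro t ht
    have h1 : δ₂ ≤ δ₁ := min_le_left _ _
    exact ⟨by linarith [ht.1], by linarith [ht.2]⟩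
  -- min of p·g on [s, s+δ₂]
  obtain ⟨x₁, hx₁m, hx₁min⟩ := (isCompact_Icc (a := s) (b := s + δ₂)).exists_isMinOn
    (nonempty_Icc.2 (by linarith)) S.contpg.continuousOn
  set m₁ := p x₁ * u' c s x₁ with hm₁
  have hm₁pos : 0 < m₁ := hpg x₁ (hsub hx₁m)
  -- min of f on [s+δ₂, T]
  have hδ₂T : s + δ₂ ≤ T := by
    have : δ₂ ≤ T - s := min_le_right _ _
    linarith
  obtain ⟨x₂, hx₂m, hx₂min⟩ := (isCompact_Icc (a := s + δ₂) (b := T)).exists_isMinOn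
    (nonempty_Icc.2 hδ₂T) S.contf.continuousOn
  set m₂ := u c s x₂ with hm₂
  have hm₂pos : 0 < m₂ := hpos x₂ ⟨by linarith [hx₂m.1], hx₂m.2⟩
  set ε := min m₁ m₂ / 2 with hε
  have hεpos : 0 < ε := by
    have := lt_min hm₁pos hm₂pos
    positivity
  obtain ⟨η, hη, hdep⟩ := F.famDep hp hpp hq hw c s (T := T) (le_of_lt hsT) hεpos
  refine ⟨η, hη, fun c' hc' t ht => ?_⟩
  set S2 := F.solAt c' s with hS2
  rcases le_or_gt t (s + δ₂) with hcase | hcase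
  · -- use monotonicity from positive derivative
    have hg2pos : ∀ r ∈ Icc s (s + δ₂), 0 < u' c' s r := by
      intro r hr
      have hr' : r ∈ Icc s T := ⟨hr.1, le_trans hr.2 hδ₂T⟩
      have hclose := (hdep c' hc' r hr').2
      have hmin := hx₁min hr
      have : m₁ ≤ p r * u' c s r := hmin
      have hεm : ε < m₁ := by
        rw [hε]
        have h1 : min m₁ m₂ ≤ m₁ := min_le_left _ _
        linarith
      have hpg2 : 0 < p r * u' c' s r := by
        have h2 := abs_le.1 hclose
        linarith [h2.1, h2.2]
      nlinarith [hpp r]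
    have hmono : StrictMonoOn (u c' s) (Icc s (s + δ₂)) := by
      apply strictMonoOn_of_deriv_pos (convex_Icc _ _) S2.contf.continuousOn
      intro x hx
      rw [interior_Icc] at hx
      rw [(S2.hd x).deriv]
      exact hg2pos x ⟨le_of_lt hx.1, le_of_lt hx.2⟩
    have := hmono (left_mem_Icc.2 (by linarith)) ⟨le_of_lt ht.1, hcase⟩ ht.1
    rwa [S2.init] at this
  · -- use closeness to the positive minimum m₂
    have ht' : t ∈ Icc s T := ⟨le_of_lt ht.1, ht.2⟩
    have hclose := (hdep c' hc' t ht').1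
    have hmin : m₂ ≤ u c s t := hx₂min ⟨le_of_lt hcase, ht.2⟩
    have hεm : ε < m₂ := by
      rw [hε]
      have h1 : min m₁ m₂ ≤ m₂ := min_le_right _ _
      linarith
    have := abs_le.1 hclose
    linarith [this.1, this.2]


include hp hpp hq hw in
/-- Openness of "has a zero in `(s,T)`" in the parameter. -/
theorem openZeroIn (F : IsSolFamilyAux p q w u u') {c s T : ℝ}
    (hzero : ∃ τ ∈ Ioo s T, u c s τ = 0) :
    ∃ η > 0, ∀ c', |c - c'| ≤ η → ∃ z ∈ Ioo s T, u c' s z = 0 := by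
  obtain ⟨τ₀, hτ₀m, hτ₀z⟩ := hzero
  set S := F.solAt c s with hS
  have hWc : Continuous fun t => c * w t := continuous_const.mul hw
  have hZne : {t | s < t ∧ u c s t = 0}.Nonempty := ⟨τ₀, hτ₀m.1, hτ₀z⟩
  obtain ⟨hτs, hτz, hτpos, hτle⟩ := S.firstZero hp hpp hZne
  set τ := sInf {t | s < t ∧ u c s t = 0} with hτdef
  have hτT : τ < T := lt_of_le_of_lt (hτle τ₀ ⟨hτ₀m.1, hτ₀z⟩) hτ₀m.2
  have hgτ : u' c s τ < 0 := S.simpleZero hp hpp hq hWc hτs hτpos hτz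
  -- g < 0 near τ
  have hgτ' : 0 < -u' c s τ := by linarith
  obtain ⟨δ, hδ, hgneg⟩ := SolAt.pos_nbhd_Icc'
    (ContinuousAt.neg ((S.contg hp hpp).continuousAt)) hgτ'
  set δ' := min δ ((T - τ) / 2) with hδ'def
  have hδ' : 0 < δ' := lt_min hδ (by linarith)
  set t₂ := τ + δ' with ht₂def
  have ht₂T : t₂ < T := by
    have : δ' ≤ (T - τ) / 2 := min_le_right _ _
    simp only [ht₂def]
    linarith
  -- f strictly decreasing on [τ, t₂]
  have hanti : StrictAntiOn (u c s) (Icc τ t₂) := by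
    apply strictAntiOn_of_deriv_neg (convex_Icc _ _) S.contf.continuousOn
    intro x hx
    rw [interior_Icc] at hx
    rw [(S.hd x).deriv]
    have : 0 < -u' c s x := by
      refine hgneg x ⟨by linarith [hx.1], ?_⟩
      have : δ' ≤ δ := min_le_left _ _
      simp only [ht₂def] at hx
      linarith [hx.2]
    linarith
  have hft₂ : u c s t₂ < 0 := by
    have := hanti (left_mem_Icc.2 (by linarith)) (right_mem_Icc.2 (by linarith))
      (by simp only [ht₂def]; linarith)
    rwa [hτz] at this
  set t₁ := (s + τ) / 2 with ht₁def
  have ht₁ : s < t₁ ∧ t₁ < τ := ⟨by simp only [ht₁def]; linarith, by simp only [ht₁def]; linarith⟩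
  have hft₁ : 0 < u c s t₁ := hτpos t₁ ⟨ht₁.1, ht₁.2⟩
  set ε := min (u c s t₁) (-u c s t₂) / 2 with hεdef
  have hεpos : 0 < ε := by
    have := lt_min hft₁ (by linarith : (0:ℝ) < -u c s t₂)
    positivity
  obtain ⟨η, hη, hdep⟩ := F.famDep hp hpp hq hw c s (T := T)
    (by linarith : s ≤ T) hεpos
  refine ⟨η, hη, fun c' hc' => ?_⟩
  have h₁ : 0 < u c' s t₁ := by
    have hcl := (hdep c' hc' t₁ ⟨by linarith, by linarith⟩).1
    have h2 := abs_le.1 hcl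
    have : ε ≤ u c s t₁ / 2 := by
      rw [hεdef]
      have := min_le_left (u c s t₁) (-u c s t₂)
      linarith
    linarith [h2.1, h2.2]
  have h₂ : u c' s t₂ < 0 := by
    have hcl := (hdep c' hc' t₂ ⟨by linarith, le_of_lt ht₂T⟩).1
    have h2 := abs_le.1 hcl
    have : ε ≤ -u c s t₂ / 2 := by
      rw [hεdef]
      have := min_le_right (u c s t₁) (-u c s t₂)
      linarith
    linarith [h2.1, h2.2]
  have ht₁₂ : t₁ ≤ t₂ := by linarith
  obtain ⟨z, hz1, hz2⟩ := intermediate_value_Ioo' ht₁₂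
    (F.solAt c' s).contf.continuousOn (⟨h₂, h₁⟩ : (0:ℝ) ∈ Ioo (u c' s t₂) (u c' s t₁))
  exact ⟨z, ⟨lt_trans ht₁.1 hz1.1, lt_of_lt_of_le hz1.2 (le_of_lt ht₂T)⟩, hz2⟩

include hp hpp hq in
/-- For large parameter the solution oscillates: zero in `(s,t₂]`. -/
theorem bigZero (F : IsSolFamilyAux p q w u u') {s t₁ t₂ δw : ℝ}
    (h1 : s < t₁) (h12 : t₁ < t₂) (hδw : 0 < δw)
    (hwlb : ∀ t ∈ Icc t₁ t₂, δw ≤ w t) :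
    ∃ C : ℝ, ∀ c, C ≤ c → ∃ z ∈ Ioc s t₂, u c s z = 0 := by
  obtain ⟨Q, hQ⟩ := (isCompact_Icc (a := t₁) (b := t₂)).exists_bound_of_continuousOn
    hq.continuousOn
  obtain ⟨xp, hxpm, hxpmin⟩ := (isCompact_Icc (a := t₁) (b := t₂)).exists_isMinOn
    (nonempty_Icc.2 (le_of_lt h12)) hp.continuousOn
  set pm := p xp with hpm
  have hpmpos : 0 < pm := hpp xp
  set ω := π / (∫ x in t₁..t₂, 1 / p x) with hω
  set C := max ((Q + ω^2 / pm) / δw) 0 with hC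
  refine ⟨C, fun c hc => ?_⟩
  apply (F.solAt c s).oscillation hp hpp h1 h12
  intro t ht
  rw [← hω]
  have hqt : q t ≤ Q := by
    have := hQ t ht
    rw [Real.norm_eq_abs] at this
    exact le_trans (le_abs_self _) this
  have hpt : pm ≤ p t := hxpmin ht
  have hωdiv : ω^2 / p t ≤ ω^2 / pm := by
    apply div_le_div_of_nonneg_left (sq_nonneg ω) hpmpos hpt
  have hc0 : 0 ≤ c := le_trans (le_max_right _ _) hc
  have hcC : (Q + ω^2 / pm) / δw ≤ c := le_trans (le_max_left _ _) hc
  have hwt : δw ≤ w t := hwlb t ht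
  have key : Q + ω^2 / pm ≤ c * δw := by
    rw [div_le_iff₀ hδw] at hcC
    linarith
  have : c * δw ≤ c * w t := mul_le_mul_of_nonneg_left hwt hc0
  linarith

end IsSolFamilyAux

section Windows

variable {w : ℝ → ℝ}

lemma sInf_lb {T₁ : ℝ} (hne : {t | T₁ < t ∧ 0 < w t}.Nonempty) :
    T₁ ≤ sInf {t | T₁ < t ∧ 0 < w t} :=
  le_csInf hne fun t ht => le_of_lt ht.1

lemma sInf_lt_witness (hw : Continuous w) {T₁ t₀ : ℝ} (ht₀ : T₁ < t₀) (hwt₀ : 0 < w t₀) :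
    sInf {t | T₁ < t ∧ 0 < w t} < t₀ := by
  obtain ⟨δ, hδ, hwp⟩ := SolAt.pos_nbhd_Icc' hw.continuousAt hwt₀
  set t' := max (t₀ - δ) ((T₁ + t₀) / 2) with ht'
  have h1 : T₁ < t' := lt_of_lt_of_le (by linarith) (le_max_right _ _)
  have h2 : t' < t₀ := max_lt (by linarith) (by linarith)
  have h3 : 0 < w t' := hwp t' ⟨le_max_left _ _, by linarith⟩
  exact lt_of_le_of_lt (csInf_le ⟨T₁, fun z hz => le_of_lt hz.1⟩ ⟨h1, h3⟩) h2

lemma posWindow (hw : Continuous w) {T₁ ε : ℝ}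
    (hne : {t | T₁ < t ∧ 0 < w t}.Nonempty) (hε : 0 < ε) :
    ∃ r₁ r₂ δw : ℝ, sInf {t | T₁ < t ∧ 0 < w t} < r₁ ∧ r₁ < r₂ ∧
      r₂ < sInf {t | T₁ < t ∧ 0 < w t} + ε ∧ 0 < δw ∧ ∀ t ∈ Icc r₁ r₂, δw ≤ w t := by
  set α := sInf {t | T₁ < t ∧ 0 < w t} with hα
  have hbdd : BddBelow {t | T₁ < t ∧ 0 < w t} := ⟨T₁, fun z hz => le_of_lt hz.1⟩
  obtain ⟨t, htm, htlt⟩ := exists_lt_of_csInf_lt hne (by linarith : α < α + ε / 2)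
  have hαt : α ≤ t := csInf_le hbdd htm
  have step1 : ∃ t', α < t' ∧ t' < α + 3 * ε / 4 ∧ 0 < w t' := by
    rcases eq_or_lt_of_le hαt with heq | hlt
    · obtain ⟨δ, hδ, hwp⟩ := SolAt.pos_nbhd_Icc' hw.continuousAt htm.2
      refine ⟨t + min δ (ε / 8),
        by rw [← heq]; have := lt_min hδ (by positivity : (0:ℝ) < ε/8); linarith, ?_, ?_⟩
      · have := min_le_right δ (ε / 8)
        rw [← heq]
        linarith
      · refine hwp _ ⟨by linarith [lt_min hδ (by positivity : (0:ℝ) < ε/8)], ?_⟩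
        have := min_le_left δ (ε / 8)
        linarith
    · exact ⟨t, hlt, by linarith, htm.2⟩
  obtain ⟨t', hαt', ht'ε, hwt'⟩ := step1
  obtain ⟨δ₂, hδ₂, hwp₂⟩ := SolAt.pos_nbhd_Icc' hw.continuousAt hwt'
  set r₁ := max (t' - δ₂) ((α + t') / 2) with hr₁
  set r₂ := min (t' + δ₂) (α + 7 * ε / 8) with hr₂
  have hr₁α : α < r₁ := lt_of_lt_of_le (by linarith) (le_max_right _ _)
  have hr₁t' : r₁ < t' := max_lt (by linarith) (by linarith)
  have hr₁₂ : r₁ < r₂ := lt_min (by linarith) (by linarith)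
  have hr₂ε : r₂ < α + ε := lt_of_le_of_lt (min_le_right _ _) (by linarith)
  have hIccsub : Icc r₁ r₂ ⊆ Icc (t' - δ₂) (t' + δ₂) := by
    intro x hx
    exact ⟨le_trans (le_max_left _ _) hx.1, le_trans hx.2 (min_le_left _ _)⟩
  obtain ⟨xm, hxm, hxmin⟩ := (isCompact_Icc (a := r₁) (b := r₂)).exists_isMinOn
    (nonempty_Icc.2 (le_of_lt hr₁₂)) hw.continuousOn
  exact ⟨r₁, r₂, w xm, hr₁α, hr₁₂, hr₂ε, hwp₂ xm (hIccsub hxm), fun t ht => hxmin ht⟩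

end Windows

namespace IsSolFamilyAux

variable {p q w : ℝ → ℝ} {u u' : ℝ → ℝ → ℝ → ℝ}
variable (hp : Continuous p) (hpp : ∀ t, 0 < p t) (hq : Continuous q) (hw : Continuous w)

include hp hpp hq hw in
theorem firstStep (F : IsSolFamilyAux p q w u u') (hqnn : ∀ t, 0 ≤ q t) {T₁ t₀ : ℝ}
    (hne : {t | T₁ < t ∧ 0 < w t}.Nonempty)
    (hα : sInf {t | T₁ < t ∧ 0 < w t} < t₀) :
    ∃ a > 0, {t | T₁ < t ∧ u a T₁ t = 0}.Nonempty ∧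
      sInf {t | T₁ < t ∧ 0 < w t} < sInf {t | T₁ < t ∧ u a T₁ t = 0} ∧
      sInf {t | T₁ < t ∧ u a T₁ t = 0} < t₀ := by
  set α := sInf {t | T₁ < t ∧ 0 < w t} with hαd
  have hT₁α : T₁ ≤ α := sInf_lb hne
  obtain ⟨r₁, r₂, δw, hαr₁, hr₁₂, hr₂t₀, hδw, hwlb⟩ :=
    posWindow hw hne (by linarith : (0:ℝ) < t₀ - α)
  have hr₂t₀' : r₂ < t₀ := by rw [← hαd] at hr₂t₀; linarith
  obtain ⟨C, hC⟩ := F.bigZero hp hpp hq (s := T₁) (lt_of_le_of_lt hT₁α hαr₁) hr₁₂ hδw hwlb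
  set a := max C 1 with ha
  have hapos : (0:ℝ) < a := lt_of_lt_of_le one_pos (le_max_right _ _)
  obtain ⟨z, hzm, hz0⟩ := hC a (le_max_left _ _)
  have hZne : {t | T₁ < t ∧ u a T₁ t = 0}.Nonempty := ⟨z, hzm.1, hz0⟩
  have hbdd : BddBelow {t | T₁ < t ∧ u a T₁ t = 0} := ⟨T₁, fun y hy => le_of_lt hy.1⟩
  have hub : sInf {t | T₁ < t ∧ u a T₁ t = 0} ≤ z := csInf_le hbdd ⟨hzm.1, hz0⟩
  obtain ⟨hτs, hτz, -, -⟩ := (F.solAt a T₁).firstZero hp hpp hZne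
  refine ⟨a, hapos, hZne, ?_, lt_of_le_of_lt hub (lt_of_le_of_lt hzm.2 hr₂t₀')⟩
  by_contra hcon
  push_neg at hcon
  -- τ ≤ α, but u > 0 on Ioc T₁ α
  have hpos : ∀ t ∈ Ioc T₁ α, 0 < u a T₁ t := by
    apply (F.solAt a T₁).posOfPotential hp hpp hq (continuous_const.mul hw)
    intro t ht
    have hwt : w t ≤ 0 := by
      by_contra hw0
      push_neg at hw0
      have : α ≤ t := csInf_le ⟨T₁, fun y hy => le_of_lt hy.1⟩ ⟨ht.1, hw0⟩
      linarith [ht.2]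
    show 0 ≤ q t - a * w t
    nlinarith [hqnn t]
  exact absurd hτz (ne_of_gt (hpos _ ⟨hτs, hcon⟩))

include hp hpp hq hw in
theorem secondStep (F : IsSolFamilyAux p q w u u') (hqnn : ∀ t, 0 ≤ q t) {s T₂ t₀ : ℝ}
    (hs : s < t₀) (ht₀ : t₀ < T₂) (hwt₀ : 0 < w t₀) :
    ∃ b > 0, {t | s < t ∧ u b s t = 0}.Nonempty ∧
      sInf {t | s < t ∧ u b s t = 0} = T₂ := by
  have hsT₂ : s < T₂ := lt_trans hs ht₀
  -- positivity at c = 0 and nearby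
  have hpos0 : ∀ t ∈ Ioc s T₂, 0 < u 0 s t := by
    apply (F.solAt 0 s).posOfPotential hp hpp hq (continuous_const.mul hw)
    intro t ht
    have := hqnn t
    show 0 ≤ q t - 0 * w t
    nlinarith
  obtain ⟨b₁, hb₁pos, hb₁⟩ := F.openPos hp hpp hq hw hsT₂ hpos0
  have hQb₁ : ∀ t ∈ Ioc s T₂, 0 < u b₁ s t := by
    apply hb₁
    rw [abs_sub_comm, sub_zero, abs_of_pos hb₁pos]
  -- window around t₀
  obtain ⟨δ, hδ, hwp⟩ := SolAt.pos_nbhd_Icc' hw.continuousAt hwt₀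
  set r₁ := max (t₀ - δ) ((s + t₀) / 2) with hr₁
  set r₂ := min (t₀ + δ) ((t₀ + T₂) / 2) with hr₂
  have hsr₁ : s < r₁ := lt_of_lt_of_le (by linarith) (le_max_right _ _)
  have hr₁t₀ : r₁ < t₀ := max_lt (by linarith) (by linarith)
  have ht₀r₂ : t₀ < r₂ := lt_min (by linarith) (by linarith)
  have hr₂T₂ : r₂ < T₂ := lt_of_le_of_lt (min_le_right _ _) (by linarith)
  obtain ⟨xm, hxm, hxmin⟩ := (isCompact_Icc (a := r₁) (b := r₂)).exists_isMinOn
    (nonempty_Icc.2 (by linarith)) hw.continuousOn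
  have hIccsub : Icc r₁ r₂ ⊆ Icc (t₀ - δ) (t₀ + δ) := fun x hx =>
    ⟨le_trans (le_max_left _ _) hx.1, le_trans hx.2 (min_le_left _ _)⟩
  have hδwpos : 0 < w xm := hwp xm (hIccsub hxm)
  obtain ⟨C, hC⟩ := F.bigZero hp hpp hq (s := s) hsr₁ (lt_trans hr₁t₀ ht₀r₂)
    hδwpos (fun t ht => hxmin ht)
  set b₂ := max C (b₁ + 1) with hb₂
  have hb₁₂ : b₁ < b₂ := lt_of_lt_of_le (by linarith) (le_max_right _ _)
  obtain ⟨z₂, hz₂m, hz₂0⟩ := hC b₂ (le_max_left _ _)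
  -- the two open sets
  set U := {b : ℝ | ∃ z ∈ Ioo s T₂, u b s z = 0} with hU
  set V := {b : ℝ | ∀ t ∈ Ioc s T₂, 0 < u b s t} with hV
  have hUopen : IsOpen U := by
    rw [Metric.isOpen_iff]
    intro b hb
    obtain ⟨η, hη, hprop⟩ := F.openZeroIn hp hpp hq hw hb
    exact ⟨η, hη, fun c' hc' => hprop c' (by
      rw [Metric.mem_ball, Real.dist_eq] at hc'
      rw [abs_sub_comm]
      exact le_of_lt hc')⟩
  have hVopen : IsOpen V := by
    rw [Metric.isOpen_iff]
    intro b hb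
    obtain ⟨η, hη, hprop⟩ := F.openPos hp hpp hq hw hsT₂ hb
    exact ⟨η, hη, fun c' hc' => hprop c' (by
      rw [Metric.mem_ball, Real.dist_eq] at hc'
      rw [abs_sub_comm]
      exact le_of_lt hc')⟩
  have hdisj : Disjoint U V := by
    rw [Set.disjoint_left]
    rintro b ⟨z, hzm, hz0⟩ hbV
    exact absurd hz0 (ne_of_gt (hbV z ⟨hzm.1, le_of_lt hzm.2⟩))
  have hnotsub : ¬ Icc b₁ b₂ ⊆ U ∪ V := by
    intro hsub
    rcases (IsPreconnected.subset_or_subset hUopen hVopen hdisj hsub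
      isPreconnected_Icc) with hUU | hVV
    · have : b₁ ∈ U := hUU (left_mem_Icc.2 (le_of_lt hb₁₂))
      obtain ⟨z, hzm, hz0⟩ := this
      exact absurd hz0 (ne_of_gt (hQb₁ z ⟨hzm.1, le_of_lt hzm.2⟩))
    · have hb₂V : b₂ ∈ V := hVV (right_mem_Icc.2 (le_of_lt hb₁₂))
      have : z₂ ∈ Ioc s T₂ := ⟨hz₂m.1, le_trans hz₂m.2 (le_of_lt hr₂T₂)⟩
      exact absurd hz₂0 (ne_of_gt (hb₂V z₂ this))
  rw [Set.not_subset] at hnotsub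
  obtain ⟨b, hbm, hbUV⟩ := hnotsub
  rw [Set.mem_union] at hbUV
  push_neg at hbUV
  obtain ⟨hbU, hbV⟩ := hbUV
  have hbpos : 0 < b := lt_of_lt_of_le hb₁pos hbm.1
  -- b has a zero in Ioc s T₂ but not in Ioo s T₂, so u b s T₂ = 0
  have hzero : ∃ z ∈ Ioc s T₂, u b s z = 0 := by
    by_contra hno
    push_neg at hno
    exact hbV ((F.solAt b s).posUntil hp hpp hno)
  obtain ⟨z, hzm, hz0⟩ := hzero
  have hzT₂ : z = T₂ := by
    rcases lt_or_eq_of_le hzm.2 with h | h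
    · exact absurd ⟨z, ⟨hzm.1, h⟩, hz0⟩ hbU
    · exact h
  rw [hzT₂] at hz0
  have hmem : T₂ ∈ {t | s < t ∧ u b s t = 0} := ⟨hsT₂, hz0⟩
  refine ⟨b, hbpos, ⟨T₂, hmem⟩, le_antisymm
    (csInf_le ⟨s, fun y hy => le_of_lt hy.1⟩ hmem) (le_csInf ⟨T₂, hmem⟩ ?_)⟩
  intro y hy
  by_contra hcon
  push_neg at hcon
  exact hbU ⟨y, ⟨hy.1, hcon⟩, hy.2⟩

end IsSolFamilyAux

theorem mainTwo {p q w₁ w₂ : ℝ → ℝ} {u₁ u₁' u₂ u₂' : ℝ → ℝ → ℝ → ℝ} {T₁ T₂ : ℝ}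
    (hT : T₁ < T₂) (hp : Continuous p) (hq : Continuous q)
    (hw₁ : Continuous w₁) (hw₂ : Continuous w₂)
    (hpp : ∀ t, 0 < p t) (hqnn : ∀ t, 0 ≤ q t)
    (F₁ : IsSolFamilyAux p q w₁ u₁ u₁') (F₂ : IsSolFamilyAux p q w₂ u₂ u₂')
    (h₁ : ∃ t ∈ Set.Ioo T₁ T₂, 0 < w₁ t) (h₂ : ∃ t ∈ Set.Ioo T₁ T₂, 0 < w₂ t)
    (hαβ : sInf {t | T₁ < t ∧ 0 < w₁ t} ≤ sInf {t | T₁ < t ∧ 0 < w₂ t}) :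
    ∃ a b : ℝ, 0 < a ∧ 0 < b ∧
      phiStep u₂ b (phiStep u₁ a (T₁ : EReal)) = (T₂ : EReal) := by
  obtain ⟨t₀, ht₀m, hwt₀⟩ := h₂
  have hα₂t₀ : sInf {t | T₁ < t ∧ 0 < w₂ t} < t₀ := sInf_lt_witness hw₂ ht₀m.1 hwt₀
  have hα₁t₀ : sInf {t | T₁ < t ∧ 0 < w₁ t} < t₀ := lt_of_le_of_lt hαβ hα₂t₀
  obtain ⟨t₁w, ht₁wm, hwt₁w⟩ := h₁
  have hne₁ : {t | T₁ < t ∧ 0 < w₁ t}.Nonempty := ⟨t₁w, ht₁wm.1, hwt₁w⟩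
  obtain ⟨a, hapos, hZ₁ne, hαs, hst₀⟩ :=
    F₁.firstStep hp hpp hq hw₁ hqnn hne₁ hα₁t₀
  set s := sInf {t | T₁ < t ∧ u₁ a T₁ t = 0} with hs
  obtain ⟨b, hbpos, hZ₂ne, hZ₂inf⟩ :=
    F₂.secondStep hp hpp hq hw₂ hqnn hst₀ ht₀m.2 hwt₀
  refine ⟨a, b, hapos, hbpos, ?_⟩
  have e1 : phiStep u₁ a (T₁ : EReal) = ((s : ℝ) : EReal) := by
    rw [phiStep, if_neg (by simp), EReal.toReal_coe, phiE,
      if_pos (show (zeroSet u₁ a T₁).Nonempty from hZ₁ne)]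
    rfl
  rw [e1, phiStep, if_neg (by simp), EReal.toReal_coe, phiE,
    if_pos (show (zeroSet u₂ b s).Nonempty from hZ₂ne)]
  exact congrArg _ hZ₂inf

/-- If `m⁺ ≢ 0` and `n⁺ ≢ 0` on `(T₁,T₂)`, then `C₂^{>++}` or
`C₂^{<++}` is nonempty; more precisely, with `α = inf{t > T₁ : m t > 0}` and
`β = inf{t > T₁ : n t > 0}`: if `α ≤ β` then `C₂^{>++} ≠ ∅`, and if `β < α`
then `C₂^{<++} ≠ ∅`. -/
theorem C2_nonempty
    (p q m n : ℝ → ℝ) (uM uM' uN uN' : ℝ → ℝ → ℝ → ℝ) (T₁ T₂ : ℝ)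
    (hT : T₁ < T₂)
    (hp : Continuous p) (hq : Continuous q) (hm : Continuous m) (hn : Continuous n)
    (hppos : ∀ t, 0 < p t) (hqnn : ∀ t, 0 ≤ q t)
    (hM : IsSolFamily p q m uM uM') (hN : IsSolFamily p q n uN uN')
    (hmplus : ∃ t ∈ Ioo T₁ T₂, 0 < m t) (hnplus : ∃ t ∈ Ioo T₁ T₂, 0 < n t) :
    ((CGt uM uN T₁ T₂ 2).Nonempty ∨ (CLt uM uN T₁ T₂ 2).Nonempty) ∧
    (sInf {t | T₁ < t ∧ 0 < m t} ≤ sInf {t | T₁ < t ∧ 0 < n t} →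
      (CGt uM uN T₁ T₂ 2).Nonempty) ∧
    (sInf {t | T₁ < t ∧ 0 < n t} < sInf {t | T₁ < t ∧ 0 < m t} →
      (CLt uM uN T₁ T₂ 2).Nonempty) := by
  have F₁ : IsSolFamilyAux p q m uM uM' := hM
  have F₂ : IsSolFamilyAux p q n uN uN' := hN
  have main1 : sInf {t | T₁ < t ∧ 0 < m t} ≤ sInf {t | T₁ < t ∧ 0 < n t} →
      (CGt uM uN T₁ T₂ 2).Nonempty := by
    intro hle
    obtain ⟨a, b, ha, hb, hcomp⟩ :=
      mainTwo hT hp hq hm hn hppos hqnn F₁ F₂ hmplus hnplus hle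
    refine ⟨(a, b), ha, hb, ?_⟩
    have h2 : PhiGt uM uN a b 2 (T₁ : EReal)
        = phiStep uN b (phiStep uM a (T₁ : EReal)) := by
      show ((if 1 % 2 = 0 then phiStep uM a else phiStep uN b)
        ∘ PhiGt uM uN a b 1) (T₁ : EReal) = _
      norm_num [PhiGt]
    rw [h2, hcomp]
  have main2 : sInf {t | T₁ < t ∧ 0 < n t} < sInf {t | T₁ < t ∧ 0 < m t} →
      (CLt uM uN T₁ T₂ 2).Nonempty := by
    intro hlt
    obtain ⟨b, a, hb, ha, hcomp⟩ :=
      mainTwo hT hp hq hn hm hppos hqnn F₂ F₁ hnplus hmplus (le_of_lt hlt)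
    refine ⟨(a, b), ha, hb, ?_⟩
    have h2 : PhiLt uM uN a b 2 (T₁ : EReal)
        = phiStep uM a (phiStep uN b (T₁ : EReal)) := by
      show ((if 1 % 2 = 0 then phiStep uN b else phiStep uM a)
        ∘ PhiLt uM uN a b 1) (T₁ : EReal) = _
      norm_num [PhiLt]
    rw [h2, hcomp]
  exact ⟨(le_or_gt (sInf {t | T₁ < t ∧ 0 < m t}) (sInf {t | T₁ < t ∧ 0 < n t})).imp
    main1 main2, main1, main2⟩
end
end
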